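/- arXiv:2207.08459 — 2 statements merged into one kernel-verified Lean document; each statement's English description precedes it below -/
import Mathlib

section
/- Let ((L,≤_L),(P_n)_{n∈ℕ}) be a grain line and P a (finite) path in the graph ⋃P. If P contains at least one edge whose P-depth is greater than the P-depth of each of the two endvertices of P, then P contains as a subpath a P-segment whose P-depth equals the maximum of the P-depths of the edges of P. -/
open SimpleGraph

/-- Two walks (with arbitrary endpoints) are edge-disjoint. -/
def EdgeDisjW {V : Type*} {G : SimpleGraph V} {a b c d : V}
    (p : G.Walk a b) (q : G.Walk c d) : Prop :=
  ∀ e, e ∈ p.edges → e ∉ q.edges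

/-- A graph is infinitely edge-connected: it has at least two vertices and
between any two distinct vertices there are infinitely many pairwise
edge-disjoint paths. -/
def InfEdgeConn {V : Type*} (G : SimpleGraph V) : Prop :=
  (∃ u v : V, u ≠ v) ∧
    ∀ u v : V, u ≠ v →
      ∃ P : ℕ → G.Walk u v,
        (∀ n, (P n).IsPath) ∧ ∀ m n, m ≠ n → EdgeDisjW (P m) (P n)

/-- Infinite edge-connectivity of the subgraph spanned by a vertex set `S`
(used for graphs of the form "union of a family of paths", whose abstract
vertex set is `S`). -/
def InfEdgeConnOn {V : Type*} (G : SimpleGraph V) (S : Set V) : Prop :=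
  (∃ u ∈ S, ∃ v ∈ S, u ≠ v) ∧
    ∀ u ∈ S, ∀ v ∈ S, u ≠ v →
      ∃ P : ℕ → G.Walk u v,
        (∀ n, (P n).IsPath) ∧ ∀ m n, m ≠ n → EdgeDisjW (P m) (P n)

/-- `α` together with the family of paths `P` (one for each edge of `H`)
is a strong immersion of `H` in `G`. -/
def IsStrongImmersion {VH VG : Type*} (H : SimpleGraph VH) (G : SimpleGraph VG)
    (α : VH → VG) (P : ∀ ⦃u v : VH⦄, H.Adj u v → G.Walk (α u) (α v)) : Prop :=
  Function.Injective α ∧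
  (∀ ⦃u v : VH⦄ (h : H.Adj u v), (P h).IsPath) ∧
  (∀ ⦃u v u' v' : VH⦄ (h : H.Adj u v) (h' : H.Adj u' v'),
      s(u, v) ≠ s(u', v') → EdgeDisjW (P h) (P h')) ∧
  (∀ ⦃u v : VH⦄ (h : H.Adj u v), ∀ w ∈ (P h).support,
      (∃ z, α z = w) → w = α u ∨ w = α v)

/-- `H` is strongly immersed in `G`. -/
def StronglyImmersed {VH VG : Type*} (H : SimpleGraph VH) (G : SimpleGraph VG) : Prop :=
  ∃ α P, IsStrongImmersion H G α P

/-- `β` together with the family of paths `P` witnesses that `G` contains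
a subdivision of `H`: the paths are internally disjoint and have no internal
vertex among the branch vertices. -/
def IsSubdivision {VH VG : Type*} (H : SimpleGraph VH) (G : SimpleGraph VG)
    (β : VH → VG) (P : ∀ ⦃u v : VH⦄, H.Adj u v → G.Walk (β u) (β v)) : Prop :=
  Function.Injective β ∧
  (∀ ⦃u v : VH⦄ (h : H.Adj u v), (P h).IsPath) ∧
  (∀ ⦃u v u' v' : VH⦄ (h : H.Adj u v) (h' : H.Adj u' v'),
      s(u, v) ≠ s(u', v') → ∀ w, w ∈ (P h).support → w ∈ (P h').support →
        (w = β u ∨ w = β v) ∧ (w = β u' ∨ w = β v')) ∧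
  (∀ ⦃u v : VH⦄ (h : H.Adj u v), ∀ w ∈ (P h).support,
      (∃ z, β z = w) → w = β u ∨ w = β v)

/-- `H` is a topological minor of `G`. -/
def TopMinor {VH VG : Type*} (H : SimpleGraph VH) (G : SimpleGraph VG) : Prop :=
  ∃ β P, IsSubdivision H G β P

/-- The dyadic rationals of the unit interval: the vertices of the halved
Farey graph. -/
def DyadicSet : Set ℚ := {q | ∃ n k : ℕ, k ≤ 2 ^ n ∧ q = (k : ℚ) / 2 ^ n}

/-- The halved Farey graph: two dyadic rationals of `[0,1]` are adjacent iff
they are of the form `k/2^n` and `(k+1)/2^n`. -/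
def halvedFarey : SimpleGraph DyadicSet where
  Adj a b := a ≠ b ∧ ∃ n k : ℕ, k + 1 ≤ 2 ^ n ∧
    ((a.1 = (k : ℚ) / 2 ^ n ∧ b.1 = ((k : ℚ) + 1) / 2 ^ n) ∨
     (b.1 = (k : ℚ) / 2 ^ n ∧ a.1 = ((k : ℚ) + 1) / 2 ^ n))
  symm := ⟨by
    rintro a b ⟨hne, n, k, hk, h⟩
    exact ⟨hne.symm, n, k, hk, h.symm⟩⟩
  loopless := ⟨by rintro a ⟨hne, -⟩; exact hne rfl⟩

/-- Adjacency in the Farey graph on `ℚ ∪ {∞}` (`none` is `∞ = ±1/0`). -/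
def fareyAdj : Option ℚ → Option ℚ → Prop
  | some q, some r =>
      q.num * (r.den : ℤ) - r.num * (q.den : ℤ) = 1 ∨
      q.num * (r.den : ℤ) - r.num * (q.den : ℤ) = -1
  | some q, none => q.den = 1
  | none, some r => r.den = 1
  | none, none => False

/-- The Farey graph. -/
def fareyGraph : SimpleGraph (Option ℚ) where
  Adj := fareyAdj
  symm := ⟨by
    rintro (_ | q) (_ | r) h <;> simp only [fareyAdj] at * <;> omega⟩
  loopless := ⟨by
    rintro (_ | q) h <;> simp only [fareyAdj] at h <;> omega⟩
/-- `u` occurs strictly before `v` on the list `l`. -/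
def Before {V : Type*} (l : List V) (u v : V) : Prop := List.Sublist [u, v] l

/-- `l` is the (consecutive) portion of the list `R` starting at `u` and
ending at `v`. -/
def IsPortion {V : Type*} (R : List V) (u v : V) (l : List V) : Prop :=
  (∃ pre post, R = pre ++ l ++ post) ∧ l.head? = some u ∧ l.getLast? = some v

/-- The union of a family of walks, as a graph on the ambient vertex set
(its abstract vertex set is `walkSupp P`). -/
def walkUnion {V : Type*} {G : SimpleGraph V} {x y : V}
    (P : ℕ → G.Walk x y) : SimpleGraph V where
  Adj u v := ∃ n, s(u, v) ∈ (P n).edges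
  symm := ⟨by
    rintro u v ⟨n, h⟩
    exact ⟨n, by rwa [Sym2.eq_swap]⟩⟩
  loopless := ⟨by
    rintro v ⟨n, h⟩
    exact G.loopless.irrefl v ((P n).edges_subset_edgeSet h)⟩

/-- The vertices appearing on some walk of the family. -/
def walkSupp {V : Type*} {G : SimpleGraph V} {x y : V}
    (P : ℕ → G.Walk x y) : Set V := {v | ∃ n, v ∈ (P n).support}

/-- An `x`–`y` grain line in `G`. -/
structure GrainLine {V : Type*} (G : SimpleGraph V) (x y : V) where
  ne_xy : x ≠ y
  /-- The limit set `L`. -/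
  L : Set V
  /-- The linear order `≤_L` on `L`. -/
  le : V → V → Prop
  /-- The pairwise edge-disjoint `x`–`y` paths. -/
  P : ℕ → G.Walk x y
  isPath : ∀ n, (P n).IsPath
  edgeDisj : ∀ m n, m ≠ n → EdgeDisjW (P m) (P n)
  le_refl : ∀ v ∈ L, le v v
  le_trans : ∀ u ∈ L, ∀ v ∈ L, ∀ w ∈ L, le u v → le v w → le u w
  le_antisymm : ∀ u ∈ L, ∀ v ∈ L, le u v → le v u → u = v
  le_total : ∀ u ∈ L, ∀ v ∈ L, le u v ∨ le v u
  x_mem : x ∈ L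
  y_mem : y ∈ L
  x_min : ∀ v ∈ L, le x v
  y_max : ∀ v ∈ L, le v y
  /-- (GL1): `L` is the set of vertices lying on a final segment of the paths. -/
  gl1 : ∀ v : V, v ∈ L ↔ ∃ N : ℕ, ∀ n : ℕ, v ∈ (P n).support ↔ N ≤ n
  /-- (GL2): a vertex of some path not in `L` lies on no other path. -/
  gl2 : ∀ n : ℕ, ∀ v ∈ (P n).support, v ∉ L → ∀ m : ℕ, m ≠ n → v ∉ (P m).support
  /-- (GL3): for `n ≥ 1`, the path `P n` traverses the vertices of `L_{<n}`
  in the order given by `≤_L`. -/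
  gl3 : ∀ n : ℕ, 1 ≤ n → ∀ u v : V, u ∈ L → v ∈ L →
      (∃ m < n, u ∈ (P m).support) → (∃ m < n, v ∈ (P m).support) →
      u ≠ v → (le u v ↔ Before (P n).support u v)

namespace GrainLine

variable {V : Type*} {G : SimpleGraph V} {x y : V}

/-- The graph `⋃𝒫` defined by the grain line. -/
def union (gl : GrainLine G x y) : SimpleGraph V := walkUnion gl.P

/-- The vertex set of `⋃𝒫`. -/
def supp (gl : GrainLine G x y) : Set V := walkSupp gl.P

/-- The set `L_{<n}` of vertices of `L` of depth `< n`. -/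
def Llt (gl : GrainLine G x y) (n : ℕ) : Set V :=
  {v | v ∈ gl.L ∧ ∃ m < n, v ∈ (gl.P m).support}

/-- The `𝒫`-depth of a vertex. -/
noncomputable def vDepth (gl : GrainLine G x y) (v : V) : ℕ :=
  sInf {n | v ∈ (gl.P n).support}

/-- The `𝒫`-depth of an edge. -/
noncomputable def eDepth (gl : GrainLine G x y) (e : Sym2 V) : ℕ :=
  sInf {n | e ∈ (gl.P n).edges}

/-- `u` and `v` are the ends of a `𝒫`-segment of depth `d`: both lie in
`L_{<d}` and `v` is the successor of `u` in `(L_{<d}, ≤_L)`. -/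
def IsSegEnds (gl : GrainLine G x y) (d : ℕ) (u v : V) : Prop :=
  u ∈ gl.Llt d ∧ v ∈ gl.Llt d ∧ u ≠ v ∧ gl.le u v ∧
    ∀ z ∈ gl.Llt d, gl.le u z → gl.le z v → z = u ∨ z = v

/-- The grain line is well-structured: every vertex of a `𝒫`-segment
`u P_d v` lying in `L` belongs to the interval `[u,v]` of `(L, ≤_L)`. -/
def WellStructured (gl : GrainLine G x y) : Prop :=
  ∀ d u v, gl.IsSegEnds d u v →
    ∀ w ∈ gl.L, (w = u ∨ w = v ∨ List.Sublist [u, w, v] (gl.P d).support) →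
      gl.le u w ∧ gl.le w v

/-- The grain line is free: the graph `⋃𝒫` it defines is infinitely
edge-connected. -/
def Free (gl : GrainLine G x y) : Prop := InfEdgeConnOn gl.union gl.supp

/-- The grain line is wildly presented. -/
def WildlyPresented (gl : GrainLine G x y) : Prop :=
  ∀ n : ℕ, 1 ≤ n → ∀ u v : V, u ∈ gl.Llt n → v ∈ gl.Llt n → u ≠ v → gl.le u v →
    ∃ w ∈ gl.L, w ≠ u ∧ w ≠ v ∧ gl.le u w ∧ gl.le w v ∧
      List.Sublist [u, w, v] (gl.P n).support

end GrainLine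

/-- `G` is a generalised halved Farey graph: it is defined by a grain line
satisfying (GL2') and (GL3'). -/
def IsGenHalvedFarey {V : Type*} (G : SimpleGraph V) : Prop :=
  ∃ (x y : V) (gl : GrainLine G x y),
    (∀ v : V, v ∈ gl.L) ∧
    (∀ u v : V, gl.le u v ↔ (u = v ∨ ∃ n, Before (gl.P n).support u v)) ∧
    (∀ u v : V, G.Adj u v ↔ ∃ n, s(u, v) ∈ (gl.P n).edges)
/-- `{A, B}` is a compound-separation of `G`. -/
def IsCompoundSep {V : Type*} (G : SimpleGraph V) (A B : Set V) : Prop :=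
  A ∪ B = Set.univ ∧ (A \ B).Nonempty ∧ (B \ A).Nonempty ∧ (A ∩ B).Finite ∧
    {p : V × V | G.Adj p.1 p.2 ∧ p.1 ∈ A \ B ∧ p.2 ∈ B \ A}.Finite

/-- The separation `{A, B}` separates the vertices `u` and `v`. -/
def SepPair {V : Type*} (A B : Set V) (u v : V) : Prop :=
  (u ∈ A \ B ∧ v ∈ B \ A) ∨ (u ∈ B \ A ∧ v ∈ A \ B)

/-- The compound-separation `{A, B}` separates `u` and `v` minimally. -/
def MinSeps {V : Type*} (G : SimpleGraph V) (A B : Set V) (u v : V) : Prop :=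
  SepPair A B u v ∧
    ∀ C D : Set V, IsCompoundSep G C D → C ∩ D ⊂ A ∩ B → ¬ SepPair C D u v

/-- `{A, B}` is a unitary compound-separation of `G` with separator `w`. -/
def IsUnitaryCSep {V : Type*} (G : SimpleGraph V) (A B : Set V) (w : V) : Prop :=
  IsCompoundSep G A B ∧ A ∩ B = {w}

/-- `w` is a compound-cutvertex of `G`. -/
def IsCompoundCutvertex {V : Type*} (G : SimpleGraph V) (w : V) : Prop :=
  ∃ A B, IsUnitaryCSep G A B w

/-- `G` is `k`-compound-connected: no compound-separation of order `< k`
separates any two vertices. -/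
def kCompConn {V : Type*} (G : SimpleGraph V) (k : ℕ) : Prop :=
  ∀ A B : Set V, IsCompoundSep G A B → (A ∩ B).ncard < k →
    ∀ u v : V, ¬ SepPair A B u v

/-- `u` and `v` cannot be separated by deleting finitely many edges. -/
def FinEdgeConn {V : Type*} (G : SimpleGraph V) (u v : V) : Prop :=
  ∀ F : Set (Sym2 V), F.Finite → (G.deleteEdges F).Reachable u v

/-- `G` is a Π-graph: it is infinitely edge-connected but has no two vertices
linked by infinitely many pairwise internally disjoint paths. -/
def PiGraph {V : Type*} (G : SimpleGraph V) : Prop :=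
  InfEdgeConn G ∧
    ∀ u v : V, u ≠ v →
      ¬ ∃ P : ℕ → G.Walk u v, (∀ n, (P n).IsPath) ∧
          ∀ m n, m ≠ n → ∀ w ∈ (P m).support, w ∈ (P n).support → w = u ∨ w = v

/-- `H` is a `k`-bounded minor of `G`: there are disjoint nonempty connected
branch sets of size `< k`. -/
def IsBddMinor {VH VG : Type*} (H : SimpleGraph VH) (G : SimpleGraph VG) (k : ℕ) : Prop :=
  ∃ B : VH → Set VG,
    (∀ h, (B h).Nonempty) ∧
    (∀ h, (B h).Finite ∧ (B h).ncard < k) ∧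
    (∀ h h', h ≠ h' → Disjoint (B h) (B h')) ∧
    (∀ h, (G.induce (B h)).Connected) ∧
    (∀ h h', H.Adj h h' → ∃ a ∈ B h, ∃ b ∈ B h', G.Adj a b)

/-- The order on oriented separations: `(A,B) ≤ (C,D)` iff `A ⊆ C` and `D ⊆ B`. -/
def osLE {V : Type*} (s t : Set V × Set V) : Prop := s.1 ⊆ t.1 ∧ t.2 ⊆ s.2

/-- The reverse orientation of an oriented separation. -/
def swapSep {V : Type*} (s : Set V × Set V) : Set V × Set V := (s.2, s.1)

/-- Two (unordered) separations, given by representative orientations, are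
nested: they have comparable orientations. -/
def NestedSep {V : Type*} (s t : Set V × Set V) : Prop :=
  osLE s t ∨ osLE t s ∨ osLE s (swapSep t) ∨ osLE (swapSep s) t

/-- `σ` is an orientation of the set `N` of separations which is a star. -/
def IsStarOrientation {V : Type*} (N σ : Set (Set V × Set V)) : Prop :=
  (∀ s ∈ N, s ∈ σ ∨ swapSep s ∈ σ) ∧
  (∀ s ∈ N, ¬ (s ∈ σ ∧ swapSep s ∈ σ)) ∧
  (∀ t ∈ σ, t ∈ N ∨ swapSep t ∈ N) ∧
  (∀ s ∈ σ, ∀ t ∈ σ, s ≠ t → osLE s (swapSep t))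

/-- The set `N` of unitary compound-separations is faithful to the
compound-cutvertex `w` in `G`. -/
def FaithfulToVert {V : Type*} (G : SimpleGraph V) (N : Set (Set V × Set V)) (w : V) : Prop :=
  (∃ σ, IsStarOrientation {s ∈ N | s.1 ∩ s.2 = {w}} σ) ∧
  ∀ u v : V, (∃ A B, IsUnitaryCSep G A B w ∧ SepPair A B u v) →
    ∃ s ∈ N, s.1 ∩ s.2 = {w} ∧ SepPair s.1 s.2 u v

/-- The set `N` of unitary compound-separations is faithful to `G`. -/
def FaithfulSet {V : Type*} (G : SimpleGraph V) (N : Set (Set V × Set V)) : Prop :=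
  ∀ w : V, IsCompoundCutvertex G w → FaithfulToVert G N w

/-- A set of graphs is typical for the class of infinitely edge-connected
graphs with regard to the topological minor relation. -/
def TypicalTopMinor (𝓗 : Set (Σ V : Type, SimpleGraph V)) : Prop :=
  ∀ (W : Type) (G : SimpleGraph W), InfEdgeConn G → ∃ H ∈ 𝓗, TopMinor H.2 G

section FirstDiveAux

variable {V : Type*}

def sedges (l : List V) : List (Sym2 V) := List.zipWith (fun a b => s(a,b)) l l.tail

lemma walk_edges_eq_sedges {G : SimpleGraph V} {a b : V} (p : G.Walk a b) :
    p.edges = sedges p.support := by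
  induction p with
  | nil => simp [sedges]
  | cons h q ih =>
    rw [Walk.edges_cons, Walk.support_cons, ih, q.support_eq_cons]
    simp only [sedges, List.tail_cons, List.zipWith_cons_cons]

lemma mem_sedges {l : List V} {e : Sym2 V} (d : V) :
    e ∈ sedges l ↔ ∃ i, i + 1 < l.length ∧ e = s(l.getD i d, l.getD (i+1) d) := by
  rw [sedges, List.mem_iff_getElem]
  constructor
  · rintro ⟨i, hi, rfl⟩
    simp only [List.length_zipWith, List.length_tail, lt_min_iff] at hi
    refine ⟨i, by omega, ?_⟩
    rw [List.getElem_zipWith, List.getElem_tail,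
      List.getD_eq_getElem l d (by omega), List.getD_eq_getElem l d (by omega)]
  · rintro ⟨i, hi, rfl⟩
    refine ⟨i, ?_, ?_⟩
    · simp only [List.length_zipWith, List.length_tail, lt_min_iff]; omega
    · rw [List.getElem_zipWith, List.getElem_tail,
        List.getD_eq_getElem l d (by omega), List.getD_eq_getElem l d (by omega)]

lemma mem_of_mem_sedges {l : List V} {e : Sym2 V} {w : V} (he : e ∈ sedges l) (hw : w ∈ e) :
    w ∈ l := by
  classical
  rw [mem_sedges w] at he
  obtain ⟨i, hi, rfl⟩ := he
  rcases Sym2.mem_iff.1 hw with h | h <;> rw [h]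
  · rw [List.getD_eq_getElem l w (by omega)]; exact List.getElem_mem _
  · rw [List.getD_eq_getElem l w (by omega)]; exact List.getElem_mem _

lemma nodup_getD_inj {l : List V} {d : V} {i j : ℕ} (h : l.Nodup)
    (hi : i < l.length) (hj : j < l.length) (he : l.getD i d = l.getD j d) : i = j := by
  rw [List.getD_eq_getElem l d hi, List.getD_eq_getElem l d hj] at he
  exact (List.Nodup.getElem_inj_iff h).1 he

lemma getD_mem {l : List V} {d : V} {i : ℕ} (hi : i < l.length) : l.getD i d ∈ l := by
  rw [List.getD_eq_getElem l d hi]; exact List.getElem_mem _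

lemma sublist_pair_exists {l : List V} {u v : V} (h : [u,v].Sublist l) :
    ∃ i j : ℕ, i < j ∧ l[i]? = some u ∧ l[j]? = some v := by
  induction l with
  | nil => simp at h
  | cons c t ih =>
    rcases h with _ | @⟨_, _, _, h⟩ | @⟨_, _, _, h⟩
    · obtain ⟨i, j, hij, hiu, hjv⟩ := ih h
      exact ⟨i+1, j+1, by omega, by simpa, by simpa⟩
    · obtain ⟨j, hj, rfl⟩ := List.mem_iff_getElem.1 (List.singleton_sublist.1 h)
      exact ⟨0, j+1, by omega, by simp, by simp [List.getElem?_eq_getElem hj]⟩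

lemma pair_sublist_of_indices {l : List V} {u v : V} {i j : ℕ} (hij : i < j)
    (hu : l[i]? = some u) (hv : l[j]? = some v) : [u,v].Sublist l := by
  have hi : i < l.length := by
    by_contra hc; rw [List.getElem?_eq_none (by omega)] at hu; simp at hu
  have hj : j < l.length := by
    by_contra hc; rw [List.getElem?_eq_none (by omega)] at hv; simp at hv
  rw [List.getElem?_eq_getElem hi] at hu
  rw [List.getElem?_eq_getElem hj] at hv
  have hsplit : l = l.take (i+1) ++ l.drop (i+1) := (List.take_append_drop _ _).symm
  have h1 : [u].Sublist (l.take (i+1)) := by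
    rw [List.singleton_sublist, ← Option.some_inj.1 hu]
    exact List.mem_take_iff_getElem.2 ⟨i, by omega, rfl⟩
  have h2 : [v].Sublist (l.drop (i+1)) := by
    rw [List.singleton_sublist, ← Option.some_inj.1 hv]
    have hlt : j - (i+1) < (l.drop (i+1)).length := by simp [List.length_drop]; omega
    have h4 : (l.drop (i+1))[j - (i+1)] = l[i+1+(j-(i+1))]'(by omega) := List.getElem_drop ..
    have h3 : l[i+1+(j-(i+1))]'(by omega) = l[j] := by congr 1; omega
    rw [← h3, ← h4]
    exact List.getElem_mem _
  have := List.Sublist.append h1 h2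
  rw [← hsplit] at this
  exact this

lemma getElem?_some_getD {V : Type*} {l : List V} {i : ℕ} {w d : V} (h : l[i]? = some w) :
    i < l.length ∧ l.getD i d = w := by
  have hi : i < l.length := by
    by_contra hc; rw [List.getElem?_eq_none (by omega)] at h; simp at h
  rw [List.getElem?_eq_getElem hi] at h
  exact ⟨hi, by rw [List.getD_eq_getElem l d hi]; exact Option.some_inj.1 h⟩

lemma getD_getElem? {V : Type*} {l : List V} {i : ℕ} (d : V) (h : i < l.length) :
    l[i]? = some (l.getD i d) := by
  rw [List.getElem?_eq_getElem h, List.getD_eq_getElem l d h]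

end FirstDiveAux

/-- a path in `⋃𝒫` containing an edge deeper than both of its
endvertices contains a `𝒫`-segment in depth equal to the maximal depth `M` of
its edges. -/
theorem grainline_first_dive {V : Type*} {G : SimpleGraph V} {x y : V}
    (gl : GrainLine G x y) {a b : V} (W : gl.union.Walk a b) (hW : W.IsPath)
    (M : ℕ) (hub : ∀ e ∈ W.edges, gl.eDepth e ≤ M)
    (hmax : ∃ e ∈ W.edges, gl.eDepth e = M)
    (hdeep : ∃ e ∈ W.edges, gl.vDepth a < gl.eDepth e ∧ gl.vDepth b < gl.eDepth e) :
    ∃ u v l, gl.IsSegEnds M u v ∧ IsPortion (gl.P M).support u v l ∧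
      (l <:+: W.support ∨ l.reverse <:+: W.support) := by
  classical
  obtain ⟨e₀, he₀, hva', hvb'⟩ := hdeep
  have hM1 : 1 ≤ M := by have := hub e₀ he₀; omega
  have hva : gl.vDepth a < M := lt_of_lt_of_le hva' (hub e₀ he₀)
  have hvb : gl.vDepth b < M := lt_of_lt_of_le hvb' (hub e₀ he₀)
  set S := (gl.P M).support with hSdef
  set T := W.support with hTdef
  have hSnd : S.Nodup := (gl.isPath M).support_nodup
  have hTnd : T.Nodup := hW.support_nodup
  have hES : (gl.P M).edges = sedges S := walk_edges_eq_sedges _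
  have hET : W.edges = sedges T := walk_edges_eq_sedges _
  have hSpos : 0 < S.length := by
    rw [hSdef]; exact List.length_pos_iff.2 (gl.P M).support_ne_nil
  have hTpos : 0 < T.length := by
    rw [hTdef]; exact List.length_pos_iff.2 W.support_ne_nil
  have hS0 : S.getD 0 x = x := by
    rw [hSdef, (gl.P M).support_eq_cons]; rfl
  have hT0 : T.getD 0 a = a := by
    rw [hTdef, W.support_eq_cons]; rfl
  have hSlast : S.getD (S.length - 1) x = y := by
    rw [List.getD_eq_getElem S x (by omega), ← List.getLast_eq_getElem (l := S) (by
      intro hc; rw [hc] at hSpos; simp at hSpos)]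
    exact (gl.P M).getLast_support
  have hTlast : T.getD (T.length - 1) a = b := by
    rw [List.getD_eq_getElem T a (by omega), ← List.getLast_eq_getElem (l := T) (by
      intro hc; rw [hc] at hTpos; simp at hTpos)]
    exact W.getLast_support
  -- every edge of W lies on some path of the family
  have hmemW : ∀ f ∈ W.edges, ∃ n, f ∈ (gl.P n).edges := by
    intro f hf
    induction f using Sym2.ind with
    | _ c d => exact W.adj_of_mem_edges hf
  have hsupp_of_edge : ∀ (f : Sym2 V) (n : ℕ), f ∈ (gl.P n).edges →
      ∀ w ∈ f, w ∈ (gl.P n).support := by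
    intro f n
    induction f using Sym2.ind with
    | _ c d =>
      intro hf w hw
      rcases Sym2.mem_iff.1 hw with rfl | rfl
      · exact (gl.P n).fst_mem_support_of_mem_edges hf
      · exact (gl.P n).snd_mem_support_of_mem_edges hf
  -- the maximal-depth edge lies on P M
  obtain ⟨e, heW, heM⟩ := hmax
  have heSmem : e ∈ sedges S := by
    have hne : {n | e ∈ (gl.P n).edges}.Nonempty := hmemW e heW
    have h1 := Nat.sInf_mem hne
    have h2 : sInf {n | e ∈ (gl.P n).edges} = M := heM
    rw [h2] at h1
    rw [← hES]; exact h1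
  -- edges of W incident to deep vertices lie on P M
  have hedgeM : ∀ f ∈ W.edges, (∀ n, f ∈ (gl.P n).edges → M ≤ n) → f ∈ sedges S := by
    intro f hf hge
    have hne : {n | f ∈ (gl.P n).edges}.Nonempty := hmemW f hf
    have h1 := Nat.sInf_mem hne
    have h2 : gl.eDepth f = M :=
      le_antisymm (hub f hf) (hge _ h1)
    have h3 : sInf {n | f ∈ (gl.P n).edges} = M := h2
    rw [h3] at h1
    rw [← hES]; exact h1
  have hxL : x ∈ gl.Llt M := ⟨gl.x_mem, 0, hM1, (gl.P 0).start_mem_support⟩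
  have hyL : y ∈ gl.Llt M := ⟨gl.y_mem, 0, hM1, (gl.P 0).end_mem_support⟩
  obtain ⟨i, hi1, hei⟩ := (mem_sedges x).1 heSmem
  -- the left end of the segment
  set j := Nat.findGreatest (fun t => t < S.length ∧ S.getD t x ∈ gl.Llt M) i with hjdef
  have hPj0 : 0 < S.length ∧ S.getD 0 x ∈ gl.Llt M := ⟨hSpos, by rw [hS0]; exact hxL⟩
  have hj : j < S.length ∧ S.getD j x ∈ gl.Llt M := by
    have := Nat.findGreatest_spec (P := fun t => t < S.length ∧ S.getD t x ∈ gl.Llt M)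
      (Nat.zero_le i) hPj0
    exact this
  have hjle : j ≤ i := Nat.findGreatest_le i
  have hjmax : ∀ t, j < t → t ≤ i → ¬(t < S.length ∧ S.getD t x ∈ gl.Llt M) := by
    intro t h1 h2
    exact Nat.findGreatest_is_greatest (P := fun t => t < S.length ∧ S.getD t x ∈ gl.Llt M)
      h1 h2
  -- the right end of the segment
  have hkex : ∃ t, (i + 1 ≤ t ∧ t < S.length) ∧ S.getD t x ∈ gl.Llt M :=
    ⟨S.length - 1, ⟨by omega, by omega⟩, by rw [hSlast]; exact hyL⟩
  set k := Nat.find hkex with hkdef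
  have hk : (i + 1 ≤ k ∧ k < S.length) ∧ S.getD k x ∈ gl.Llt M := Nat.find_spec hkex
  have hkmin : ∀ t, t < k → ¬((i + 1 ≤ t ∧ t < S.length) ∧ S.getD t x ∈ gl.Llt M) :=
    fun t ht => Nat.find_min hkex ht
  have hik : i + 1 ≤ k := hk.1.1
  have hkS : k < S.length := hk.1.2
  have hjk : j < k := by omega
  -- interior vertices are not in L_{<M}
  have hint : ∀ t, j < t → t < k → S.getD t x ∉ gl.Llt M := by
    intro t h1 h2 hmem
    rcases le_or_gt t i with h | h
    · exact hjmax t h1 h ⟨by omega, hmem⟩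
    · exact hkmin t h2 ⟨⟨by omega, by omega⟩, hmem⟩
  -- interior vertices only lie on paths of index ≥ M
  have hdeepvert : ∀ t, j < t → t < k → ∀ n, S.getD t x ∈ (gl.P n).support → M ≤ n := by
    intro t h1 h2
    have hwM : S.getD t x ∈ (gl.P M).support := by
      rw [← hSdef]; exact getD_mem (by omega)
    by_cases hwL : S.getD t x ∈ gl.L
    · obtain ⟨N, hN⟩ := (gl.gl1 _).1 hwL
      have hNle : N ≤ M := (hN M).1 hwM
      have hMN : M ≤ N := by
        by_contra hc
        exact hint t h1 h2 ⟨hwL, N, by omega, (hN N).2 le_rfl⟩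
      intro n hn; have := (hN n).1 hn; omega
    · intro n hn
      by_contra hc
      exact gl.gl2 M _ hwM hwL n (by omega) hn
  -- interior vertices are distinct from the ends of W
  have hne_ab : ∀ t, j < t → t < k → S.getD t x ≠ a ∧ S.getD t x ≠ b := by
    intro t h1 h2
    have hwM : S.getD t x ∈ (gl.P M).support := by
      rw [← hSdef]; exact getD_mem (by omega)
    constructor
    · intro hEq
      have hne : {n | a ∈ (gl.P n).support}.Nonempty := ⟨M, hEq ▸ hwM⟩
      have h3 := Nat.sInf_mem hne
      have h4 : M ≤ sInf {n | a ∈ (gl.P n).support} :=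
        hdeepvert t h1 h2 _ (by rw [hEq]; exact h3)
      have h5 : gl.vDepth a = sInf {n | a ∈ (gl.P n).support} := rfl
      omega
    · intro hEq
      have hne : {n | b ∈ (gl.P n).support}.Nonempty := ⟨M, hEq ▸ hwM⟩
      have h3 := Nat.sInf_mem hne
      have h4 : M ≤ sInf {n | b ∈ (gl.P n).support} :=
        hdeepvert t h1 h2 _ (by rw [hEq]; exact h3)
      have h5 : gl.vDepth b = sInf {n | b ∈ (gl.P n).support} := rfl
      omega
  -- edges of P M at an interior vertex of S
  have hSedge_at : ∀ f ∈ sedges S, ∀ t, 0 < t → t + 1 < S.length → S.getD t x ∈ f →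
      f = s(S.getD (t-1) x, S.getD t x) ∨ f = s(S.getD t x, S.getD (t+1) x) := by
    intro f hf t ht0 ht1 hwf
    obtain ⟨c, hc, rfl⟩ := (mem_sedges x).1 hf
    rcases Sym2.mem_iff.1 hwf with h | h
    · right
      obtain rfl : t = c := nodup_getD_inj hSnd (by omega) (by omega) h
      rfl
    · left
      obtain rfl : t = c + 1 := nodup_getD_inj hSnd (by omega) (by omega) h
      rfl
  -- the key propagation step
  have hboth : ∀ m, j < m → m < k → S.getD m x ∈ T →
      s(S.getD (m-1) x, S.getD m x) ∈ sedges T ∧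
      s(S.getD m x, S.getD (m+1) x) ∈ sedges T := by
    intro m hm1 hm2 hmT
    obtain ⟨r, hr, hrw⟩ := List.mem_iff_getElem.1 hmT
    have hrw' : T.getD r a = S.getD m x := by
      rw [List.getD_eq_getElem _ _ hr]; exact hrw
    have hab := hne_ab m hm1 hm2
    have hr0 : 0 < r := by
      rcases Nat.eq_zero_or_pos r with rfl | h
      · exact absurd (hrw'.symm.trans hT0) hab.1
      · exact h
    have hr1 : r + 1 < T.length := by
      by_contra hc
      have hrl : r = T.length - 1 := by omega
      exact hab.2 (by rw [← hrw', hrl, hTlast])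
    have hfm : s(T.getD (r-1) a, T.getD r a) ∈ sedges T := by
      refine (mem_sedges a).2 ⟨r-1, by omega, ?_⟩
      rw [show r-1+1 = r by omega]
    have hfp : s(T.getD r a, T.getD (r+1) a) ∈ sedges T :=
      (mem_sedges a).2 ⟨r, by omega, rfl⟩
    have hwm : S.getD m x ∈ s(T.getD (r-1) a, T.getD r a) := by
      rw [← hrw']; exact Sym2.mem_mk_right _ _
    have hwp : S.getD m x ∈ s(T.getD r a, T.getD (r+1) a) := by
      rw [← hrw']; exact Sym2.mem_mk_left _ _
    have hgen : ∀ f : Sym2 V, S.getD m x ∈ f → ∀ n, f ∈ (gl.P n).edges → M ≤ n :=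
      fun f hwf n hfn => hdeepvert m hm1 hm2 n (hsupp_of_edge f n hfn _ hwf)
    have hfmS : s(T.getD (r-1) a, T.getD r a) ∈ sedges S :=
      hedgeM _ (by rw [hET]; exact hfm) (hgen _ hwm)
    have hfpS : s(T.getD r a, T.getD (r+1) a) ∈ sedges S :=
      hedgeM _ (by rw [hET]; exact hfp) (hgen _ hwp)
    have h1 := hSedge_at _ hfmS m (by omega) (by omega) hwm
    have h2 := hSedge_at _ hfpS m (by omega) (by omega) hwp
    have hfne : s(T.getD (r-1) a, T.getD r a) ≠ s(T.getD r a, T.getD (r+1) a) := by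
      intro hEq
      rcases Sym2.eq_iff.1 hEq with ⟨h3, h4⟩ | ⟨h3, h4⟩
      · exact absurd (nodup_getD_inj hTnd (by omega) (by omega) h3) (by omega)
      · exact absurd (nodup_getD_inj hTnd (by omega) (by omega) h3) (by omega)
    rcases h1 with h1 | h1 <;> rcases h2 with h2 | h2
    · exact absurd (h1.trans h2.symm) hfne
    · exact ⟨by rw [← h1]; exact hfm, by rw [← h2]; exact hfp⟩
    · exact ⟨by rw [← h2]; exact hfp, by rw [← h1]; exact hfm⟩
    · exact absurd (h1.trans h2.symm) hfne
  -- the base edge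
  have hbase : s(S.getD i x, S.getD (i+1) x) ∈ sedges T := by
    rw [← hei, ← hET]; exact heW
  -- all edges of the segment are edges of W
  have hGood : ∀ t, j ≤ t → t + 1 ≤ k → s(S.getD t x, S.getD (t+1) x) ∈ sedges T := by
    have hup : ∀ d, i + d + 1 ≤ k → s(S.getD (i+d) x, S.getD (i+d+1) x) ∈ sedges T := by
      intro d
      induction d with
      | zero => intro _; exact hbase
      | succ d ih =>
        intro hle
        have hprev := ih (by omega)
        have hwT : S.getD (i+d+1) x ∈ T := mem_of_mem_sedges hprev (Sym2.mem_mk_right _ _)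
        exact (hboth (i+d+1) (by omega) (by omega) hwT).2
    have hdown : ∀ d, d ≤ i - j → s(S.getD (i-d) x, S.getD (i-d+1) x) ∈ sedges T := by
      intro d
      induction d with
      | zero => intro _; exact hbase
      | succ d ih =>
        intro hle
        have hprev := ih (by omega)
        have hwT : S.getD (i-d) x ∈ T := mem_of_mem_sedges hprev (Sym2.mem_mk_left _ _)
        have h := (hboth (i-d) (by omega) (by omega) hwT).1
        rw [show i-(d+1)+1 = i-d by omega]
        exact h
    intro t h1 h2
    rcases le_or_gt t i with h | h
    · have := hdown (i - t) (by omega)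
      rwa [show i - (i-t) = t by omega] at this
    · have := hup (t - i) (by omega)
      rwa [show i + (t-i) = t by omega] at this
  -- segment vertices lie on W
  have hmemT : ∀ t, j ≤ t → t ≤ k → S.getD t x ∈ T := by
    intro t h1 h2
    rcases lt_or_eq_of_le h2 with h | h
    · exact mem_of_mem_sedges (hGood t h1 (by omega)) (Sym2.mem_mk_left _ _)
    · have h3 := hGood (k-1) (by omega) (by omega)
      rw [show k-1+1 = k by omega] at h3
      rw [h]
      exact mem_of_mem_sedges h3 (Sym2.mem_mk_right _ _)
  -- positions of the segment vertices on W
  set ρ : ℕ → ℕ := fun t => T.idxOf (S.getD t x) with hρdef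
  have hρ1 : ∀ t, j ≤ t → t ≤ k → ρ t < T.length ∧ T.getD (ρ t) a = S.getD t x := by
    intro t h1 h2
    have hm := hmemT t h1 h2
    have hlt : T.idxOf (S.getD t x) < T.length := List.idxOf_lt_length_iff.2 hm
    exact ⟨hlt, by rw [List.getD_eq_getElem _ _ hlt]; exact List.getElem_idxOf hlt⟩
  have hstep : ∀ t, j ≤ t → t + 1 ≤ k → ρ (t+1) = ρ t + 1 ∨ ρ t = ρ (t+1) + 1 := by
    intro t h1 h2
    obtain ⟨c, hc, hEq⟩ := (mem_sedges a).1 (hGood t h1 h2)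
    have hρt := hρ1 t h1 (by omega)
    have hρt1 := hρ1 (t+1) (by omega) h2
    rcases Sym2.eq_iff.1 hEq with ⟨h3, h4⟩ | ⟨h3, h4⟩
    · left
      have e1 : ρ t = c := nodup_getD_inj hTnd hρt.1 (by omega) (by rw [hρt.2, h3])
      have e2 : ρ (t+1) = c+1 := nodup_getD_inj hTnd hρt1.1 (by omega) (by rw [hρt1.2, h4])
      omega
    · right
      have e1 : ρ t = c+1 := nodup_getD_inj hTnd hρt.1 (by omega) (by rw [hρt.2, h3])
      have e2 : ρ (t+1) = c := nodup_getD_inj hTnd hρt1.1 (by omega) (by rw [hρt1.2, h4])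
      omega
  -- the ends of the segment
  set u := S.getD j x with hudef
  set v := S.getD k x with hvdef
  set l : List V := (S.drop j).take (k - j + 1) with hldef
  have hllen : l.length = k - j + 1 := by
    rw [hldef, List.length_take, List.length_drop]; omega
  have hlget : ∀ n, n ≤ k - j → l[n]? = some (S.getD (j+n) x) := by
    intro n hn
    rw [hldef, List.getElem?_take_of_lt (by omega), List.getElem?_drop]
    exact getD_getElem? x (by omega)
  have huv : u ≠ v := by
    intro hEq
    have := nodup_getD_inj hSnd (show j < S.length by omega) hkS hEq
    omega
  obtain ⟨huL, hud⟩ := hj.2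
  obtain ⟨hvL, hvd⟩ := hk.2
  have hBuv : Before S u v :=
    pair_sublist_of_indices hjk (getD_getElem? x (by omega)) (getD_getElem? x hkS)
  have hleuv : gl.le u v :=
    (gl.gl3 M hM1 u v huL hvL hud hvd huv).2 hBuv
  have hseg : gl.IsSegEnds M u v := by
    refine ⟨⟨huL, hud⟩, ⟨hvL, hvd⟩, huv, hleuv, ?_⟩
    intro z hz hle1 hle2
    by_contra hcon
    push_neg at hcon
    obtain ⟨hzu, hzv⟩ := hcon
    obtain ⟨hzL, hzd⟩ := hz
    have h1 := (gl.gl3 M hM1 u z huL hzL hud hzd (Ne.symm hzu)).1 hle1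
    have h2 := (gl.gl3 M hM1 z v hzL hvL hzd hvd hzv).1 hle2
    obtain ⟨p, q, hpq, hpu, hqz⟩ := sublist_pair_exists h1
    obtain ⟨p', q', hpq', hpz, hqv⟩ := sublist_pair_exists h2
    obtain ⟨hpl, hpe⟩ := getElem?_some_getD (d := x) hpu
    obtain ⟨hql, hqe⟩ := getElem?_some_getD (d := x) hqz
    obtain ⟨hpl', hpe'⟩ := getElem?_some_getD (d := x) hpz
    obtain ⟨hql', hqe'⟩ := getElem?_some_getD (d := x) hqv
    have hpj : p = j := nodup_getD_inj hSnd hpl (by omega) (by rw [hpe])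
    have hqk : q' = k := nodup_getD_inj hSnd hql' hkS (by rw [hqe'])
    have hqq' : q = p' := nodup_getD_inj hSnd hql hpl' (by rw [hqe, hpe'])
    have hnot : S.getD q x ∉ gl.Llt M := hint q (by omega) (by omega)
    exact hnot (by rw [hqe]; exact ⟨hzL, hzd⟩)
  have hport : IsPortion S u v l := by
    refine ⟨⟨S.take j, S.drop (k+1), ?_⟩, ?_, ?_⟩
    · have h1 : S.drop (k+1) = (S.drop j).drop (k-j+1) := by
        rw [List.drop_drop]; congr 1; omega
      rw [hldef, h1, List.append_assoc, List.take_append_drop, List.take_append_drop]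
    · rw [List.head?_eq_getElem?, hlget 0 (by omega)]
      rfl
    · rw [List.getLast?_eq_getElem?, hllen,
        show k-j+1-1 = k-j from rfl, hlget (k-j) le_rfl,
        show j+(k-j) = k by omega]
  refine ⟨u, v, l, hseg, hport, ?_⟩
  rcases hstep j le_rfl (by omega) with hdir | hdir
  · -- the portion appears forwards on W
    left
    have hmono : ∀ d, j + d + 1 ≤ k → ρ (j+d+1) = ρ (j+d) + 1 := by
      intro d
      induction d with
      | zero => intro _; exact hdir
      | succ d ih =>
        intro hle
        have hprev := ih (by omega)
        rcases hstep (j+d+1) (by omega) (by omega) with h | h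
        · exact h
        · exfalso
          have hEq2 : ρ (j+d+1+1) = ρ (j+d) := by omega
          have hv2 := (hρ1 (j+d+1+1) (by omega) (by omega)).2
          have hv0 := (hρ1 (j+d) (by omega) (by omega)).2
          have hEq3 : S.getD (j+d+1+1) x = S.getD (j+d) x := by
            rw [← hv2, ← hv0, hEq2]
          have := nodup_getD_inj hSnd (by omega) (by omega) hEq3
          omega
    have haccum : ∀ d, j + d ≤ k → ρ (j+d) = ρ j + d := by
      intro d
      induction d with
      | zero => intro _; rfl
      | succ d ih =>
        intro hle
        have h1 := ih (by omega)
        have h2 := hmono d (by omega)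
        show ρ (j+d+1) = ρ j + (d+1)
        omega
    have hρk := (hρ1 k (by omega) le_rfl).1
    have hjkρ : ρ j + (k-j) = ρ k := by
      have := haccum (k-j) (by omega)
      rw [show j + (k-j) = k by omega] at this
      omega
    have hl2 : l = (T.drop (ρ j)).take (k-j+1) := by
      apply List.ext_getElem?
      intro n
      rcases le_or_gt n (k-j) with hn | hn
      · have hρn := hρ1 (j+n) (by omega) (by omega)
        have hacc := haccum n (by omega)
        rw [hlget n hn, List.getElem?_take_of_lt (by omega), List.getElem?_drop,
          getD_getElem? a (show ρ j + n < T.length by omega)]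
        congr 1
        rw [← hacc]
        exact hρn.2.symm
      · rw [List.getElem?_eq_none (by rw [hllen]; omega),
          List.getElem?_eq_none (by rw [List.length_take, List.length_drop]; omega)]
    rw [hl2]
    exact ⟨T.take (ρ j), (T.drop (ρ j)).drop (k-j+1), by
      rw [List.append_assoc, List.take_append_drop, List.take_append_drop]⟩
  · -- the portion appears backwards on W
    right
    have hmono : ∀ d, j + d + 1 ≤ k → ρ (j+d) = ρ (j+d+1) + 1 := by
      intro d
      induction d with
      | zero => intro _; exact hdir
      | succ d ih =>
        intro hle
        have hprev := ih (by omega)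
        rcases hstep (j+d+1) (by omega) (by omega) with h | h
        · exfalso
          have hEq2 : ρ (j+d+1+1) = ρ (j+d) := by omega
          have hv2 := (hρ1 (j+d+1+1) (by omega) (by omega)).2
          have hv0 := (hρ1 (j+d) (by omega) (by omega)).2
          have hEq3 : S.getD (j+d+1+1) x = S.getD (j+d) x := by
            rw [← hv2, ← hv0, hEq2]
          have := nodup_getD_inj hSnd (by omega) (by omega) hEq3
          omega
        · exact h
    have haccum : ∀ d, j + d ≤ k → ρ (j+d) + d = ρ j := by
      intro d
      induction d with
      | zero => intro _; rfl
      | succ d ih =>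
        intro hle
        have h1 := ih (by omega)
        have h2 := hmono d (by omega)
        show ρ (j+d+1) + (d+1) = ρ j
        omega
    have hρk := (hρ1 k (by omega) le_rfl).1
    have hjkρ : ρ k + (k-j) = ρ j := by
      have := haccum (k-j) (by omega)
      rw [show j + (k-j) = k by omega] at this
      omega
    have hl2 : l.reverse = (T.drop (ρ k)).take (k-j+1) := by
      apply List.ext_getElem?
      intro n
      rcases le_or_gt n (k-j) with hn | hn
      · have hrev : l.reverse[n]? = l[l.length - 1 - n]? :=
          List.getElem?_reverse (by rw [hllen]; omega)
        have hacc2 := haccum (k-n-j) (by omega)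
        rw [show j+(k-n-j) = k-n by omega] at hacc2
        have hρkn := hρ1 (k-n) (by omega) (by omega)
        have hEq : ρ k + n = ρ (k-n) := by omega
        rw [hrev, hllen, show k-j+1-1-n = k-j-n from rfl,
          hlget (k-j-n) (by omega), show j+(k-j-n) = k-n by omega,
          List.getElem?_take_of_lt (by omega), List.getElem?_drop,
          getD_getElem? a (show ρ k + n < T.length by omega)]
        congr 1
        rw [hEq]
        exact hρkn.2.symm
      · rw [List.getElem?_eq_none (by rw [List.length_reverse, hllen]; omega),
          List.getElem?_eq_none (by rw [List.length_take, List.length_drop]; omega)]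
    rw [hl2]
    exact ⟨T.take (ρ k), (T.drop (ρ k)).drop (k-j+1), by
      rw [List.append_assoc, List.take_append_drop, List.take_append_drop]⟩
end

section
/- Let G be an infinitely edge-connected graph and X a finite set of vertices of G. Then exactly one of the following holds: (1) there is a strong immersion of K^{ℵ₀} in G with at most one branch vertex in every edge-block of G−X; (2) G−X has only finitely many edge-blocks. -/
open SimpleGraph

section Aux
variable {V : Type*} {G : SimpleGraph V}

lemma fec_refl {W : Type*} (H : SimpleGraph W) (u : W) : FinEdgeConn H u u :=
  fun _ _ => Reachable.refl u

lemma fec_symm {W : Type*} {H : SimpleGraph W} {u v : W} (h : FinEdgeConn H u v) :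
    FinEdgeConn H v u := fun F hF => (h F hF).symm

lemma fec_trans {W : Type*} {H : SimpleGraph W} {u v w : W} (h : FinEdgeConn H u v)
    (h' : FinEdgeConn H v w) : FinEdgeConn H u w := fun F hF => (h F hF).trans (h' F hF)

lemma fec_class_eq {W : Type*} {H : SimpleGraph W} {a b : W} (h : FinEdgeConn H a b) :
    {u | FinEdgeConn H u a} = {u | FinEdgeConn H u b} := by
  ext u
  exact ⟨fun hu => fec_trans hu h, fun hu => fec_trans hu (fec_symm h)⟩

/-- Transfer a walk with support in `s` to the induced subgraph. -/
lemma walk_to_induce {s : Set V} :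
    ∀ {u v : V} (p : G.Walk u v) (hu : u ∈ s) (hv : v ∈ s),
      (∀ w ∈ p.support, w ∈ s) →
      ∃ q : (G.induce s).Walk ⟨u, hu⟩ ⟨v, hv⟩,
        ∀ e ∈ q.edges, Sym2.map Subtype.val e ∈ p.edges := by
  intro u v p
  induction p with
  | nil => intro hu hv _; exact ⟨SimpleGraph.Walk.nil, by simp⟩
  | cons h p ih =>
    rename_i a b c
    intro hu hv hsupp
    have hb : b ∈ s := hsupp b (by simp)
    obtain ⟨q, hq⟩ := ih hb hv (fun w hw => hsupp w (by simp [hw]))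
    refine ⟨SimpleGraph.Walk.cons (by exact h) q, ?_⟩
    intro e he
    change e ∈ s(⟨a, hu⟩, ⟨b, hb⟩) :: q.edges at he
    rcases List.mem_cons.1 he with rfl | he
    · simp
    · simp [hq e he]

/-- An infinite edge-disjoint family of walks with support avoiding `X`
witnesses finite-edge-connectivity in the induced graph. -/
lemma fec_of_family {X : Set V} {u v : ↥(Xᶜ : Set V)}
    (P : ℕ → G.Walk (u : V) (v : V))
    (hdisj : ∀ m n, m ≠ n → EdgeDisjW (P m) (P n))
    (hsupp : ∀ n, ∀ w ∈ (P n).support, w ∈ (Xᶜ : Set V)) :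
    FinEdgeConn (G.induce (Xᶜ : Set V)) u v := by
  intro F hF
  have hbad : {n : ℕ | ∃ e ∈ F, Sym2.map Subtype.val e ∈ (P n).edges}.Finite := by
    have hsub : {n : ℕ | ∃ e ∈ F, Sym2.map Subtype.val e ∈ (P n).edges} ⊆
        ⋃ e ∈ F, {n : ℕ | Sym2.map Subtype.val e ∈ (P n).edges} := by
      intro n ⟨e, he, hn⟩
      exact Set.mem_biUnion he hn
    refine Set.Finite.subset (Set.Finite.biUnion hF ?_) hsub
    intro e _
    refine Set.Subsingleton.finite ?_
    intro m hm n hn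
    by_contra hmn
    exact hdisj m n hmn _ hm hn
  obtain ⟨n, hn⟩ := (Set.Finite.infinite_compl hbad).nonempty
  obtain ⟨q, hq⟩ := walk_to_induce (P n) u.2 v.2 (hsupp n)
  have hq' : ∀ e ∈ q.edges, e ∉ F := by
    intro e he heF
    exact hn ⟨e, heF, hq e he⟩
  exact (q.toDeleteEdges F hq').reachable

/-- Truncate a walk at its first vertex in `T`. -/
lemma prefix_first_hit {T : Set V} :
    ∀ {u v : V} (p : G.Walk u v), u ∉ T → (∃ w ∈ p.support, w ∈ T) →
      ∃ x ∈ T, ∃ q : G.Walk u x, q.edges ⊆ p.edges ∧ q.support ⊆ p.support ∧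
        (∀ w ∈ q.support, w ∈ T → w = x) ∧ (p.IsPath → q.IsPath) := by
  intro u v p
  induction p with
  | nil =>
    intro hu hmeet
    obtain ⟨w, hw, hwT⟩ := hmeet
    simp only [SimpleGraph.Walk.support_nil, List.mem_singleton] at hw
    exact absurd (hw ▸ hwT) hu
  | cons h p ih =>
    rename_i a b c
    intro hu hmeet
    by_cases hb : b ∈ T
    · refine ⟨b, hb, SimpleGraph.Walk.cons h SimpleGraph.Walk.nil, ?_, ?_, ?_, ?_⟩
      · intro e he; simp only [SimpleGraph.Walk.edges_cons, SimpleGraph.Walk.edges_nil,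
          List.mem_singleton] at he; simp [he]
      · intro w hw; simp only [SimpleGraph.Walk.support_cons, SimpleGraph.Walk.support_nil,
          List.mem_cons, List.mem_singleton, List.not_mem_nil] at hw ⊢
        rcases hw with rfl | hw
        · left; rfl
        · rcases hw with rfl | hw
          · right; exact SimpleGraph.Walk.start_mem_support p
          · simp at hw
      · intro w hw hwT
        simp only [SimpleGraph.Walk.support_cons, SimpleGraph.Walk.support_nil,
          List.mem_cons, List.mem_singleton] at hw
        rcases hw with rfl | hw
        · exact absurd hwT hu
        · rcases hw with rfl | hw
          · rfl
          · simp at hw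
      · intro _
        rw [SimpleGraph.Walk.cons_isPath_iff]
        exact ⟨SimpleGraph.Walk.IsPath.nil, by simp [h.ne]⟩
    · have hmeet' : ∃ w ∈ p.support, w ∈ T := by
        obtain ⟨w, hw, hwT⟩ := hmeet
        simp only [SimpleGraph.Walk.support_cons, List.mem_cons] at hw
        rcases hw with rfl | hw
        · exact absurd hwT hu
        · exact ⟨w, hw, hwT⟩
      obtain ⟨x, hx, q, hqe, hqs, hqT, hqp⟩ := ih hb hmeet'
      refine ⟨x, hx, SimpleGraph.Walk.cons h q, ?_, ?_, ?_, ?_⟩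
      · intro e he
        rw [SimpleGraph.Walk.edges_cons] at he ⊢
        rcases List.mem_cons.1 he with rfl | he
        · exact List.mem_cons_self
        · exact List.mem_cons_of_mem _ (hqe he)
      · intro w hw
        rw [SimpleGraph.Walk.support_cons] at hw ⊢
        rcases List.mem_cons.1 hw with rfl | hw
        · exact List.mem_cons_self
        · exact List.mem_cons_of_mem _ (hqs hw)
      · intro w hw hwT
        rw [SimpleGraph.Walk.support_cons] at hw
        rcases List.mem_cons.1 hw with rfl | hw
        · exact absurd hwT hu
        · exact hqT w hw hwT
      · intro hp
        rw [SimpleGraph.Walk.cons_isPath_iff] at hp ⊢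
        exact ⟨hqp hp.1, fun hc => hp.2 (hqs hc)⟩
lemma exists_infinite_fiber {ι : Type*} {T : Set ι} (hT : T.Finite) {A : ι → Set ℕ}
    {S : Set ℕ} (hS : S.Infinite) (hcov : ∀ n ∈ S, ∃ x ∈ T, n ∈ A x) :
    ∃ x ∈ T, (S ∩ A x).Infinite := by
  by_contra h
  push_neg at h
  have hfin : ∀ x ∈ T, (S ∩ A x).Finite := fun x hx => h x hx
  have hsub : S ⊆ ⋃ x ∈ T, (S ∩ A x) := by
    intro n hn
    obtain ⟨x, hx, hnx⟩ := hcov n hn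
    exact Set.mem_biUnion hx ⟨hn, hnx⟩
  exact hS (Set.Finite.subset (Set.Finite.biUnion hT hfin) hsub)

lemma finite_bad_edges {x y : V} (Q : ℕ → G.Walk x y)
    (hdisj : ∀ m n, m ≠ n → EdgeDisjW (Q m) (Q n)) {E : Set (Sym2 V)} (hE : E.Finite) :
    {a : ℕ | ∃ e ∈ E, e ∈ (Q a).edges}.Finite := by
  have hsub : {a : ℕ | ∃ e ∈ E, e ∈ (Q a).edges} ⊆ ⋃ e ∈ E, {a : ℕ | e ∈ (Q a).edges} := by
    intro a ⟨e, he, ha⟩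
    exact Set.mem_biUnion he ha
  refine Set.Finite.subset (Set.Finite.biUnion hE fun e _ => Set.Subsingleton.finite ?_) hsub
  intro m hm n hn
  by_contra hmn
  exact hdisj m n hmn _ hm hn

/-- `x` is a hub for `u`: an infinite edge-disjoint family of `u`–`x` paths
internally avoiding `X`. -/
def HubFam {V : Type*} (G : SimpleGraph V) (X : Set V) (u : V) (x : V) : Prop :=
  x ∈ X ∧ ∃ Q : ℕ → G.Walk u x,
    (∀ a, (Q a).IsPath) ∧ (∀ m n, m ≠ n → EdgeDisjW (Q m) (Q n)) ∧
    (∀ a, ∀ w ∈ (Q a).support, w ∈ X → w = x)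

lemma exists_hub {X : Set V} (hX : X.Finite) (hG : InfEdgeConn G)
    {u z : ↥(Xᶜ : Set V)} (hnfec : ¬ FinEdgeConn (G.induce (Xᶜ : Set V)) u z) :
    ∃ x, HubFam G X (u : V) x := by
  have hne : (u : V) ≠ (z : V) := by
    intro h
    exact hnfec (Subtype.ext h ▸ fec_refl _ _)
  obtain ⟨P, hP, hdisj⟩ := hG.2 u z hne
  set S : Set ℕ := {n | ∃ w ∈ (P n).support, w ∈ X} with hSdef
  have hmeets : S.Infinite := by
    by_contra hfin
    rw [Set.not_infinite] at hfin
    obtain emb := (Set.Finite.infinite_compl hfin).natEmbedding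
    apply hnfec
    refine fec_of_family (fun k => P (emb k).1) ?_ ?_
    · intro m n hmn
      refine hdisj _ _ fun h => hmn (emb.injective (Subtype.ext h))
    · intro n w hw
      by_contra hwX
      exact (emb n).2 ⟨w, hw, not_not.1 fun h => hwX h⟩
  set A : V → Set ℕ := fun x => {n | ∃ q : G.Walk (u : V) x, q.edges ⊆ (P n).edges ∧
      (∀ w ∈ q.support, w ∈ X → w = x) ∧ q.IsPath} with hAdef
  have hcov : ∀ n ∈ S, ∃ x ∈ X, n ∈ A x := by
    intro n hn
    obtain ⟨x, hx, q, hqe, _, hqT, hqp⟩ := prefix_first_hit (P n) u.2 hn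
    exact ⟨x, hx, q, hqe, hqT, hqp (hP n)⟩
  obtain ⟨x, hxX, hinfx⟩ := exists_infinite_fiber hX hmeets hcov
  obtain emb := hinfx.natEmbedding
  have hmem : ∀ a : ℕ, (emb a).1 ∈ A x := fun a => (emb a).2.2
  refine ⟨x, hxX, fun a => Classical.choose (hmem a), ?_, ?_, ?_⟩
  · intro a
    exact (Classical.choose_spec (hmem a)).2.2
  · intro m n hmn e he hc
    have hm := (Classical.choose_spec (hmem m)).1 he
    have hn' := (Classical.choose_spec (hmem n)).1 hc
    have : (emb m).1 ≠ (emb n).1 :=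
      fun h => hmn (emb.injective (Subtype.ext h))
    exact hdisj _ _ this e hm hn'
  · intro a
    exact (Classical.choose_spec (hmem a)).2.1

lemma finite_hits {X : Set V} {u u' : ↥(Xᶜ : Set V)} {x : V} (hxX : x ∈ X)
    {Q : ℕ → G.Walk (u : V) x} (hQp : ∀ a, (Q a).IsPath)
    (hQd : ∀ m n, m ≠ n → EdgeDisjW (Q m) (Q n))
    (hQX : ∀ a, ∀ w ∈ (Q a).support, w ∈ X → w = x)
    (hnfec : ¬ FinEdgeConn (G.induce (Xᶜ : Set V)) u u') :
    {a : ℕ | (u' : V) ∈ (Q a).support}.Finite := by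
  classical
  rw [← Set.not_infinite]
  intro hinf
  obtain emb := hinf.natEmbedding
  have hxu' : (u' : V) ≠ x := fun h => u'.2 (h ▸ hxX)
  have hmem : ∀ a : ℕ, (u' : V) ∈ (Q (emb a).1).support := fun a => (emb a).2
  set r : ℕ → G.Walk (u : V) (u' : V) :=
    fun a => (Q (emb a).1).takeUntil (u' : V) (hmem a) with hrdef
  have hxnot : ∀ a, x ∉ (r a).support := by
    intro a hxr
    set p := Q (emb a).1 with hpdef
    have hnodup := (hQp (emb a).1).support_nodup
    have hspec := p.take_spec (hmem a)
    have hsup : p.support = (p.takeUntil (u' : V) (hmem a)).support ++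
        (p.dropUntil (u' : V) (hmem a)).support.tail := by
      conv_lhs => rw [← hspec]
      exact SimpleGraph.Walk.support_append _ _
    rw [hsup, List.nodup_append] at hnodup
    have hxdrop : x ∈ (p.dropUntil (u' : V) (hmem a)).support.tail := by
      have hend := (p.dropUntil (u' : V) (hmem a)).end_mem_support
      rw [SimpleGraph.Walk.support_eq_cons] at hend
      rcases List.mem_cons.1 hend with h | h
      · exact absurd h.symm hxu'
      · exact h
    exact hnodup.2.2 x hxr x hxdrop rfl
  apply hnfec
  refine fec_of_family r ?_ ?_
  · intro m n hmn e he hc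
    have : (emb m).1 ≠ (emb n).1 :=
      fun h => hmn (emb.injective (Subtype.ext h))
    exact hQd _ _ this e (SimpleGraph.Walk.edges_takeUntil_subset _ _ he)
      (SimpleGraph.Walk.edges_takeUntil_subset _ _ hc)
  · intro a w hw
    have hw' : w ∈ (Q (emb a).1).support :=
      SimpleGraph.Walk.support_takeUntil_subset _ _ hw
    intro hwX
    exact hxnot a ((hQX _ w hw' hwX) ▸ hw)
lemma exists_pool {X : Set V} (hX : X.Finite) (hG : InfEdgeConn G)
    (hinf : {C : Set ↥(Xᶜ : Set V) |
        ∃ v, C = {u | FinEdgeConn (G.induce (Xᶜ : Set V)) u v}}.Infinite) :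
    ∃ (w : ℕ → ↥(Xᶜ : Set V)) (x : V),
      (∀ m n, m ≠ n → ¬ FinEdgeConn (G.induce (Xᶜ : Set V)) (w m) (w n)) ∧
      ∀ n, HubFam G X ((w n : V)) x := by
  obtain e := hinf.natEmbedding
  have hrepex : ∀ n : ℕ, ∃ z, (e n).1 = {u | FinEdgeConn (G.induce (Xᶜ : Set V)) u z} :=
    fun n => (e n).2
  set rep : ℕ → ↥(Xᶜ : Set V) := fun n => Classical.choose (hrepex n) with hrep
  have hpair : ∀ m n : ℕ, m ≠ n →
      ¬ FinEdgeConn (G.induce (Xᶜ : Set V)) (rep m) (rep n) := by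
    intro m n hmn hfec
    apply hmn
    have h1 := Classical.choose_spec (hrepex m)
    have h2 := Classical.choose_spec (hrepex n)
    have : (e m).1 = (e n).1 := by
      rw [h1, h2, fec_class_eq hfec]
    exact e.injective (Subtype.ext this)
  have hcov : ∀ n : ℕ, n ∈ (Set.univ : Set ℕ) →
      ∃ x ∈ X, n ∈ {n : ℕ | HubFam G X ((rep (n+1) : V)) x} := by
    intro n _
    obtain ⟨x, hx⟩ := exists_hub hX hG (hpair (n+1) 0 (by omega))
    exact ⟨x, hx.1, hx⟩
  obtain ⟨x, hxX, hinfx⟩ := exists_infinite_fiber hX Set.infinite_univ hcov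
  obtain emb := hinfx.natEmbedding
  refine ⟨fun k => rep ((emb k).1 + 1), x, ?_, ?_⟩
  · intro m n hmn
    refine hpair _ _ fun h => hmn (emb.injective (Subtype.ext (by omega)))
  · intro n
    exact (emb n).2.2
/-! ### The recursive construction -/

def stg (i j : ℕ) : ℕ := 2 * Nat.pair i j + 1

lemma stg_gt (i j : ℕ) : 2*i < stg i j ∧ 2*j < stg i j := by
  have h1 := Nat.left_le_pair i j
  have h2 := Nat.right_le_pair i j
  unfold stg; omega

lemma stg_lt_imp {i j t : ℕ} (h : stg i j < t) : i < t ∧ j < t := by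
  have h1 := Nat.left_le_pair i j
  have h2 := Nat.right_le_pair i j
  unfold stg at h; omega

lemma stg_inj {i j i' j' : ℕ} (h : stg i j = stg i' j') : i = i' ∧ j = j' := by
  have : Nat.pair i j = Nat.pair i' j' := by unfold stg at h; omega
  have h2 := congrArg Nat.unpair this
  rw [Nat.unpair_pair, Nat.unpair_pair] at h2
  exact ⟨congrArg Prod.fst h2, congrArg Prod.snd h2⟩

def bIdx (h : ℕ → ℕ × ℕ) (k : ℕ) : ℕ := (h (2*k)).1

variable (x : V) (vv : ℕ → V) (Q : ∀ n : ℕ, ℕ → G.Walk (vv n) x)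

def pw1 (h : ℕ → ℕ × ℕ) (i j : ℕ) : G.Walk (vv (bIdx h i)) x :=
  Q (bIdx h i) (h (stg i j)).1

def pw2 (h : ℕ → ℕ × ℕ) (i j : ℕ) : G.Walk (vv (bIdx h j)) x :=
  Q (bIdx h j) (h (stg i j)).2

def UsedE (h : ℕ → ℕ × ℕ) (t : ℕ) : Set (Sym2 V) :=
  {e | ∃ i j, i < j ∧ stg i j < t ∧
    (e ∈ (pw1 x vv Q h i j).edges ∨ e ∈ (pw2 x vv Q h i j).edges)}

def UsedV (h : ℕ → ℕ × ℕ) (t : ℕ) : Set V :=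
  {z | ∃ i j, i < j ∧ stg i j < t ∧
    (z ∈ (pw1 x vv Q h i j).support ∨ z ∈ (pw2 x vv Q h i j).support)}

def CInv (h : ℕ → ℕ × ℕ) (t : ℕ) : Prop :=
  (∀ k k', 2*k < t → 2*k' < t → k ≠ k' → bIdx h k ≠ bIdx h k') ∧
  (∀ k, 2*k < t → vv (bIdx h k) ∉ UsedV x vv Q h (2*k)) ∧
  (∀ i j, i < j → stg i j < t →
    (∀ e ∈ (pw1 x vv Q h i j).edges, e ∉ UsedE x vv Q h (stg i j)) ∧
    (∀ e ∈ (pw2 x vv Q h i j).edges, e ∉ UsedE x vv Q h (stg i j) ∧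
        e ∉ (pw1 x vv Q h i j).edges) ∧
    (∀ k, 2*k < stg i j → k ≠ i → vv (bIdx h k) ∉ (pw1 x vv Q h i j).support) ∧
    (∀ k, 2*k < stg i j → k ≠ j → vv (bIdx h k) ∉ (pw2 x vv Q h i j).support))

lemma Q_congr {n n' a a' : ℕ} (hn : n = n') (ha : a = a') :
    (Q n a).edges = (Q n' a').edges ∧ (Q n a).support = (Q n' a').support := by
  subst hn; subst ha; exact ⟨rfl, rfl⟩

lemma bIdx_congr {h h' : ℕ → ℕ × ℕ} {t k : ℕ} (hag : ∀ s, s < t → h s = h' s)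
    (hk : 2*k < t) : bIdx h k = bIdx h' k :=
  congrArg Prod.fst (hag _ hk)

lemma pw1_congr {h h' : ℕ → ℕ × ℕ} {t i j : ℕ} (hag : ∀ s, s < t → h s = h' s)
    (hst : stg i j < t) :
    (pw1 x vv Q h i j).edges = (pw1 x vv Q h' i j).edges ∧
    (pw1 x vv Q h i j).support = (pw1 x vv Q h' i j).support :=
  Q_congr x vv Q (bIdx_congr hag (lt_trans (stg_gt i j).1 hst))
    (congrArg Prod.fst (hag _ hst))

lemma pw2_congr {h h' : ℕ → ℕ × ℕ} {t i j : ℕ} (hag : ∀ s, s < t → h s = h' s)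
    (hst : stg i j < t) :
    (pw2 x vv Q h i j).edges = (pw2 x vv Q h' i j).edges ∧
    (pw2 x vv Q h i j).support = (pw2 x vv Q h' i j).support :=
  Q_congr x vv Q (bIdx_congr hag (lt_trans (stg_gt i j).2 hst))
    (congrArg Prod.snd (hag _ hst))

lemma UsedE_congr {h h' : ℕ → ℕ × ℕ} {t s : ℕ} (hag : ∀ s', s' < t → h s' = h' s')
    (hs : s ≤ t) : UsedE x vv Q h s = UsedE x vv Q h' s := by
  ext e
  constructor
  · rintro ⟨i, j, hij, hst, he⟩
    refine ⟨i, j, hij, hst, ?_⟩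
    rwa [(pw1_congr x vv Q hag (lt_of_lt_of_le hst hs)).1,
      (pw2_congr x vv Q hag (lt_of_lt_of_le hst hs)).1] at he
  · rintro ⟨i, j, hij, hst, he⟩
    refine ⟨i, j, hij, hst, ?_⟩
    rwa [(pw1_congr x vv Q hag (lt_of_lt_of_le hst hs)).1,
      (pw2_congr x vv Q hag (lt_of_lt_of_le hst hs)).1]

lemma UsedV_congr {h h' : ℕ → ℕ × ℕ} {t s : ℕ} (hag : ∀ s', s' < t → h s' = h' s')
    (hs : s ≤ t) : UsedV x vv Q h s = UsedV x vv Q h' s := by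
  ext z
  constructor
  · rintro ⟨i, j, hij, hst, he⟩
    refine ⟨i, j, hij, hst, ?_⟩
    rwa [(pw1_congr x vv Q hag (lt_of_lt_of_le hst hs)).2,
      (pw2_congr x vv Q hag (lt_of_lt_of_le hst hs)).2] at he
  · rintro ⟨i, j, hij, hst, he⟩
    refine ⟨i, j, hij, hst, ?_⟩
    rwa [(pw1_congr x vv Q hag (lt_of_lt_of_le hst hs)).2,
      (pw2_congr x vv Q hag (lt_of_lt_of_le hst hs)).2]

lemma Inv_congr {h h' : ℕ → ℕ × ℕ} {t : ℕ} (hag : ∀ s, s < t → h s = h' s)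
    (hI : CInv x vv Q h t) : CInv x vv Q h' t := by
  obtain ⟨h1, h2, h3⟩ := hI
  refine ⟨?_, ?_, ?_⟩
  · intro k k' hk hk' hkk
    rw [← bIdx_congr hag hk, ← bIdx_congr hag hk']
    exact h1 k k' hk hk' hkk
  · intro k hk
    rw [← bIdx_congr hag hk, ← UsedV_congr x vv Q hag (le_of_lt hk)]
    exact h2 k hk
  · intro i j hij hst
    obtain ⟨c1, c2, c3, c4⟩ := h3 i j hij hst
    have e1 := pw1_congr x vv Q hag hst
    have e2 := pw2_congr x vv Q hag hst
    have eU := UsedE_congr x vv Q hag (le_of_lt hst)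
    refine ⟨?_, ?_, ?_, ?_⟩
    · intro e he; rw [← e1.1] at he; rw [← eU]; exact c1 e he
    · intro e he; rw [← e2.1] at he; rw [← eU, ← e1.1]; exact c2 e he
    · intro k hk hki
      rw [← bIdx_congr hag (lt_trans hk hst), ← e1.2]
      exact c3 k hk hki
    · intro k hk hkj
      rw [← bIdx_congr hag (lt_trans hk hst), ← e2.2]
      exact c4 k hk hkj

lemma UsedE_finite (h : ℕ → ℕ × ℕ) (t : ℕ) : (UsedE x vv Q h t).Finite := by
  have hsub : UsedE x vv Q h t ⊆ ⋃ i ∈ Set.Iio t, ⋃ j ∈ Set.Iio t,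
      ({e | e ∈ (pw1 x vv Q h i j).edges} ∪ {e | e ∈ (pw2 x vv Q h i j).edges}) := by
    rintro e ⟨i, j, hij, hst, he⟩
    have := stg_lt_imp hst
    exact Set.mem_biUnion this.1 (Set.mem_biUnion this.2 he)
  refine Set.Finite.subset ?_ hsub
  refine Set.Finite.biUnion (Set.finite_Iio t) fun i _ =>
    Set.Finite.biUnion (Set.finite_Iio t) fun j _ => ?_
  exact Set.Finite.union (List.finite_toSet _) (List.finite_toSet _)

lemma UsedV_finite (h : ℕ → ℕ × ℕ) (t : ℕ) : (UsedV x vv Q h t).Finite := by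
  have hsub : UsedV x vv Q h t ⊆ ⋃ i ∈ Set.Iio t, ⋃ j ∈ Set.Iio t,
      ({z | z ∈ (pw1 x vv Q h i j).support} ∪ {z | z ∈ (pw2 x vv Q h i j).support}) := by
    rintro z ⟨i, j, hij, hst, hz⟩
    have := stg_lt_imp hst
    exact Set.mem_biUnion this.1 (Set.mem_biUnion this.2 hz)
  refine Set.Finite.subset ?_ hsub
  refine Set.Finite.biUnion (Set.finite_Iio t) fun i _ =>
    Set.Finite.biUnion (Set.finite_Iio t) fun j _ => ?_
  exact Set.Finite.union (List.finite_toSet _) (List.finite_toSet _)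
lemma step_ex (hvinj : Function.Injective vv)
    (hQd : ∀ n m m', m ≠ m' → EdgeDisjW (Q n m) (Q n m'))
    (hQ4 : ∀ n m, n ≠ m → {a : ℕ | vv m ∈ (Q n a).support}.Finite)
    (t : ℕ) (h : ℕ → ℕ × ℕ) (hI : CInv x vv Q h t) :
    ∃ d, CInv x vv Q (Function.update h t d) (t+1) := by
  classical
  have hagu : ∀ d : ℕ × ℕ, ∀ s, s < t → h s = Function.update h t d s :=
    fun d s hs => (Function.update_of_ne (by omega) _ _).symm
  rcases Nat.even_or_odd t with ht | ht
  · -- even stage: choose a fresh pool index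
    obtain ⟨k₀, hk₀⟩ := ht
    have hbadfin : ((fun k => bIdx h k) '' (Set.Iio t) ∪
        vv ⁻¹' (UsedV x vv Q h t)).Finite := by
      refine Set.Finite.union (Set.Finite.image _ (Set.finite_Iio t)) ?_
      exact Set.Finite.preimage (Function.Injective.injOn hvinj) (UsedV_finite x vv Q h t)
    obtain ⟨n₀, hn₀⟩ := hbadfin.infinite_compl.nonempty
    rw [Set.mem_compl_iff, Set.mem_union, not_or] at hn₀
    refine ⟨(n₀, 0), ?_⟩
    set h' := Function.update h t (n₀, 0) with hh'
    obtain ⟨hold1, hold2, hold3⟩ := Inv_congr x vv Q (hagu (n₀, 0)) hI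
    have hbt : bIdx h' k₀ = n₀ := by
      have : 2*k₀ = t := by omega
      simp only [bIdx, this, hh', Function.update_self]
    refine ⟨?_, ?_, ?_⟩
    · intro k k' hk hk' hkk
      rcases Nat.lt_or_ge (2*k) t with hlt | hge
      · rcases Nat.lt_or_ge (2*k') t with hlt' | hge'
        · exact hold1 k k' hlt hlt' hkk
        · have hk'e : k' = k₀ := by omega
          subst hk'e
          rw [hbt, ← bIdx_congr (hagu (n₀,0)) hlt]
          intro hc
          exact hn₀.1 ⟨k, by exact lt_of_le_of_lt (by omega) hlt, hc⟩
      · have hke : k = k₀ := by omega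
        subst hke
        have hlt' : 2*k' < t := by omega
        rw [hbt, ← bIdx_congr (hagu (n₀,0)) hlt']
        intro hc
        exact hn₀.1 ⟨k', by exact lt_of_le_of_lt (by omega) hlt', hc.symm⟩
    · intro k hk
      rcases Nat.lt_or_ge (2*k) t with hlt | hge
      · exact hold2 k hlt
      · have hke : k = k₀ := by omega
        subst hke
        rw [hbt]
        have h2k : 2*k = t := by omega
        rw [h2k, ← UsedV_congr x vv Q (hagu (n₀,0)) (le_refl t)]
        exact hn₀.2
    · intro i j hij hst
      have hst' : stg i j < t := by
        have : stg i j ≠ t := by unfold stg; omega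
        omega
      exact hold3 i j hij hst'
  · -- odd stage
    obtain ⟨m, hm⟩ := ht
    by_cases hij0 : (Nat.unpair m).1 < (Nat.unpair m).2
    · set i := (Nat.unpair m).1 with hi
      set j := (Nat.unpair m).2 with hj
      have hstm : stg i j = t := by
        unfold stg
        rw [hi, hj, Nat.pair_unpair]
        omega
      have h2i : 2*i < t := by have := (stg_gt i j).1; omega
      have h2j : 2*j < t := by have := (stg_gt i j).2; omega
      set ni := bIdx h i with hni
      set nj := bIdx h j with hnj
      -- choose a
      have hbadAfin : ({a : ℕ | ∃ e ∈ UsedE x vv Q h t, e ∈ (Q ni a).edges} ∪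
          {a : ℕ | ∃ k, 2*k < t ∧ k ≠ i ∧ vv (bIdx h k) ∈ (Q ni a).support}).Finite := by
        refine Set.Finite.union
          (finite_bad_edges (Q ni) (hQd ni) (UsedE_finite x vv Q h t)) ?_
        have hsub : {a : ℕ | ∃ k, 2*k < t ∧ k ≠ i ∧ vv (bIdx h k) ∈ (Q ni a).support} ⊆
            ⋃ k ∈ {k : ℕ | 2*k < t ∧ k ≠ i}, {a : ℕ | vv (bIdx h k) ∈ (Q ni a).support} := by
          rintro a ⟨k, hk, hki, ha⟩
          exact Set.mem_biUnion ⟨hk, hki⟩ ha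
        refine Set.Finite.subset (Set.Finite.biUnion ?_ ?_) hsub
        · exact Set.Finite.subset (Set.finite_Iio t) (fun k hk => by
            simp only [Set.mem_setOf_eq] at hk; simp only [Set.mem_Iio]; omega)
        · rintro k ⟨hk, hki⟩
          exact hQ4 ni (bIdx h k) (Ne.symm (hI.1 k i hk h2i hki))
      obtain ⟨a, ha⟩ := hbadAfin.infinite_compl.nonempty
      rw [Set.mem_compl_iff, Set.mem_union, not_or] at ha
      -- choose b
      have hbadBfin : ({b : ℕ | ∃ e ∈ (UsedE x vv Q h t ∪ {e | e ∈ (Q ni a).edges}),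
          e ∈ (Q nj b).edges} ∪
          {b : ℕ | ∃ k, 2*k < t ∧ k ≠ j ∧ vv (bIdx h k) ∈ (Q nj b).support}).Finite := by
        refine Set.Finite.union
          (finite_bad_edges (Q nj) (hQd nj)
            (Set.Finite.union (UsedE_finite x vv Q h t) (List.finite_toSet _))) ?_
        have hsub : {b : ℕ | ∃ k, 2*k < t ∧ k ≠ j ∧ vv (bIdx h k) ∈ (Q nj b).support} ⊆
            ⋃ k ∈ {k : ℕ | 2*k < t ∧ k ≠ j}, {b : ℕ | vv (bIdx h k) ∈ (Q nj b).support} := by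
          rintro b ⟨k, hk, hkj, hb⟩
          exact Set.mem_biUnion ⟨hk, hkj⟩ hb
        refine Set.Finite.subset (Set.Finite.biUnion ?_ ?_) hsub
        · exact Set.Finite.subset (Set.finite_Iio t) (fun k hk => by
            simp only [Set.mem_setOf_eq] at hk; simp only [Set.mem_Iio]; omega)
        · rintro k ⟨hk, hkj⟩
          exact hQ4 nj (bIdx h k) (Ne.symm (hI.1 k j hk h2j hkj))
      obtain ⟨b, hb⟩ := hbadBfin.infinite_compl.nonempty
      rw [Set.mem_compl_iff, Set.mem_union, not_or] at hb
      refine ⟨(a, b), ?_⟩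
      set h' := Function.update h t (a, b) with hh'
      obtain ⟨hold1, hold2, hold3⟩ := Inv_congr x vv Q (hagu (a, b)) hI
      have hbni : bIdx h' i = ni := (bIdx_congr (hagu (a,b)) h2i).symm
      have hbnj : bIdx h' j = nj := (bIdx_congr (hagu (a,b)) h2j).symm
      have hht : h' t = (a, b) := Function.update_self _ _ _
      have epw1 : (pw1 x vv Q h' i j).edges = (Q ni a).edges ∧
          (pw1 x vv Q h' i j).support = (Q ni a).support := by
        unfold pw1
        rw [hstm, hht]
        exact Q_congr x vv Q hbni rfl
      have epw2 : (pw2 x vv Q h' i j).edges = (Q nj b).edges ∧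
          (pw2 x vv Q h' i j).support = (Q nj b).support := by
        unfold pw2
        rw [hstm, hht]
        exact Q_congr x vv Q hbnj rfl
      have eUE : UsedE x vv Q h' t = UsedE x vv Q h t :=
        (UsedE_congr x vv Q (hagu (a,b)) (le_refl t)).symm
      refine ⟨?_, ?_, ?_⟩
      · intro k k' hk hk' hkk
        exact hold1 k k' (by omega) (by omega) hkk
      · intro k hk
        exact hold2 k (by omega)
      · intro i' j' hij' hst'
        rcases Nat.lt_or_ge (stg i' j') t with hlt | hge
        · exact hold3 i' j' hij' hlt
        · have hsteq : stg i' j' = t := by omega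
          have hpm : Nat.pair i' j' = m := by unfold stg at hsteq; omega
          have hii : i' = i ∧ j' = j := by
            have := congrArg Nat.unpair hpm
            rw [Nat.unpair_pair] at this
            constructor
            · rw [hi, ← this]
            · rw [hj, ← this]
          obtain ⟨rfl, rfl⟩ := hii
          rw [hsteq]
          refine ⟨?_, ?_, ?_, ?_⟩
          · intro e he
            rw [epw1.1] at he
            rw [eUE]
            exact fun hc => ha.1 ⟨e, hc, he⟩
          · intro e he
            rw [epw2.1] at he
            constructor
            · rw [eUE]
              exact fun hc => hb.1 ⟨e, Or.inl hc, he⟩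
            · rw [epw1.1]
              exact fun hc => hb.1 ⟨e, Or.inr hc, he⟩
          · intro k hk hki
            rw [epw1.2, ← bIdx_congr (hagu (a,b)) (by omega : 2*k < t)]
            exact fun hc => ha.2 ⟨k, by omega, hki, hc⟩
          · intro k hk hkj
            rw [epw2.2, ← bIdx_congr (hagu (a,b)) (by omega : 2*k < t)]
            exact fun hc => hb.2 ⟨k, by omega, hkj, hc⟩
    · refine ⟨(0, 0), ?_⟩
      obtain ⟨hold1, hold2, hold3⟩ := Inv_congr x vv Q (hagu (0, 0)) hI
      refine ⟨fun k k' hk hk' hkk => hold1 k k' (by omega) (by omega) hkk,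
        fun k hk => hold2 k (by omega), ?_⟩
      intro i' j' hij' hst'
      rcases Nat.lt_or_ge (stg i' j') t with hlt | hge
      · exact hold3 i' j' hij' hlt
      · exfalso
        have hsteq : stg i' j' = t := by omega
        have hpm : Nat.pair i' j' = m := by unfold stg at hsteq; omega
        have := congrArg Nat.unpair hpm
        rw [Nat.unpair_pair] at this
        apply hij0
        rw [← this]
        exact hij'
noncomputable def Mseq (hvinj : Function.Injective vv)
    (hQd : ∀ n m m', m ≠ m' → EdgeDisjW (Q n m) (Q n m'))
    (hQ4 : ∀ n m, n ≠ m → {a : ℕ | vv m ∈ (Q n a).support}.Finite) :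
    ∀ t : ℕ, {h : ℕ → ℕ × ℕ // CInv x vv Q h t}
  | 0 => ⟨fun _ => (0, 0),
      ⟨fun _ _ hk _ _ => absurd hk (by omega),
       fun _ hk => absurd hk (by omega),
       fun _ _ _ hst => absurd hst (by omega)⟩⟩
  | (t+1) =>
    ⟨Function.update (Mseq hvinj hQd hQ4 t).1 t
        (Classical.choose (step_ex x vv Q hvinj hQd hQ4 t
          (Mseq hvinj hQd hQ4 t).1 (Mseq hvinj hQd hQ4 t).2)),
      Classical.choose_spec (step_ex x vv Q hvinj hQd hQ4 t
          (Mseq hvinj hQd hQ4 t).1 (Mseq hvinj hQd hQ4 t).2)⟩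

lemma Mseq_agree (hvinj : Function.Injective vv)
    (hQd : ∀ n m m', m ≠ m' → EdgeDisjW (Q n m) (Q n m'))
    (hQ4 : ∀ n m, n ≠ m → {a : ℕ | vv m ∈ (Q n a).support}.Finite) :
    ∀ t s : ℕ, s < t →
      (Mseq x vv Q hvinj hQd hQ4 t).1 s = (Mseq x vv Q hvinj hQd hQ4 (s+1)).1 s := by
  intro t
  induction t with
  | zero => intro s hs; omega
  | succ t ih =>
    intro s hs
    rcases Nat.lt_or_ge s t with hlt | hge
    · have : (Mseq x vv Q hvinj hQd hQ4 (t+1)).1 s = (Mseq x vv Q hvinj hQd hQ4 t).1 s := by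
        simp only [Mseq]
        exact Function.update_of_ne (by omega) _ _
      rw [this, ih s hlt]
    · have hst : s = t := by omega
      subst hst
      rfl

lemma build_immersion (hvinj : Function.Injective vv)
    (hQp : ∀ n a, (Q n a).IsPath)
    (hQd : ∀ n m m', m ≠ m' → EdgeDisjW (Q n m) (Q n m'))
    (hQ4 : ∀ n m, n ≠ m → {a : ℕ | vv m ∈ (Q n a).support}.Finite) :
    ∃ (N : ℕ → ℕ) (W : ∀ i j : ℕ, i < j → G.Walk (vv (N i)) (vv (N j))),
      Function.Injective N ∧
      (∀ i j (hij : i < j), (W i j hij).IsPath) ∧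
      (∀ i j (hij : i < j) i' j' (hij' : i' < j'), (i, j) ≠ (i', j') →
        EdgeDisjW (W i j hij) (W i' j' hij')) ∧
      (∀ i j (hij : i < j), ∀ z, vv (N z) ∈ (W i j hij).support → z = i ∨ z = j) := by
  classical
  set hH : ℕ → ℕ × ℕ := fun s => (Mseq x vv Q hvinj hQd hQ4 (s+1)).1 s with hHdef
  have hCInv : ∀ t, CInv x vv Q hH t := by
    intro t
    refine Inv_congr x vv Q ?_ (Mseq x vv Q hvinj hQd hQ4 t).2
    intro s hs
    exact Mseq_agree x vv Q hvinj hQd hQ4 t s hs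
  refine ⟨fun k => bIdx hH k, fun i j hij =>
      ((pw1 x vv Q hH i j).append (pw2 x vv Q hH i j).reverse).bypass, ?_, ?_, ?_, ?_⟩
  · -- injectivity
    intro k k' hkk
    by_contra hne
    exact (hCInv (2*k + 2*k' + 1)).1 k k' (by omega) (by omega) hne hkk
  · intro i j hij
    exact SimpleGraph.Walk.bypass_isPath _
  · -- edge-disjointness
    have hWedge : ∀ (i j : ℕ) (hij : i < j), ∀ e,
        e ∈ (((pw1 x vv Q hH i j).append (pw2 x vv Q hH i j).reverse).bypass).edges →
        e ∈ (pw1 x vv Q hH i j).edges ∨ e ∈ (pw2 x vv Q hH i j).edges := by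
      intro i j hij e he
      have := SimpleGraph.Walk.edges_bypass_subset _ he
      rw [SimpleGraph.Walk.edges_append, List.mem_append,
        SimpleGraph.Walk.edges_reverse, List.mem_reverse] at this
      exact this
    have hUsed : ∀ (i j : ℕ), i < j → ∀ t, stg i j < t → ∀ e,
        (e ∈ (pw1 x vv Q hH i j).edges ∨ e ∈ (pw2 x vv Q hH i j).edges) →
        e ∈ UsedE x vv Q hH t := by
      intro i j hij t ht e he
      exact ⟨i, j, hij, ht, he⟩
    intro i j hij i' j' hij' hne e he hc
    have he' := hWedge i j hij e he
    have hc' := hWedge i' j' hij' e hc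
    have hstne : stg i j ≠ stg i' j' := by
      intro hs
      obtain ⟨h1, h2⟩ := stg_inj hs
      exact hne (by rw [h1, h2])
    rcases Nat.lt_or_ge (stg i j) (stg i' j') with hlt | hge
    · have hmem : e ∈ UsedE x vv Q hH (stg i' j') := hUsed i j hij _ hlt e he'
      obtain ⟨c1, c2, -, -⟩ := (hCInv (stg i' j' + 1)).2.2 i' j' hij' (by omega)
      rcases hc' with h1 | h2
      · exact c1 e h1 hmem
      · exact (c2 e h2).1 hmem
    · have hlt : stg i' j' < stg i j := by omega
      have hmem : e ∈ UsedE x vv Q hH (stg i j) := hUsed i' j' hij' _ hlt e hc'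
      obtain ⟨c1, c2, -, -⟩ := (hCInv (stg i j + 1)).2.2 i j hij (by omega)
      rcases he' with h1 | h2
      · exact c1 e h1 hmem
      · exact (c2 e h2).1 hmem
  · -- branch vertices on the walk
    intro i j hij z hz
    have hsup : vv (bIdx hH z) ∈ (pw1 x vv Q hH i j).support ∨
        vv (bIdx hH z) ∈ (pw2 x vv Q hH i j).support := by
      have h1 := SimpleGraph.Walk.support_bypass_subset _ hz
      rw [SimpleGraph.Walk.support_append, List.mem_append] at h1
      rcases h1 with h1 | h1
      · exact Or.inl h1
      · right
        have := List.mem_of_mem_tail h1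
        rwa [SimpleGraph.Walk.support_reverse, List.mem_reverse] at this
    by_contra hcon
    push_neg at hcon
    obtain ⟨hzi, hzj⟩ := hcon
    rcases Nat.lt_trichotomy (2*z) (stg i j) with hlt | heq | hgt
    · obtain ⟨-, -, c3, c4⟩ := (hCInv (stg i j + 1)).2.2 i j hij (by omega)
      rcases hsup with h1 | h1
      · exact c3 z hlt hzi h1
      · exact c4 z hlt hzj h1
    · exact absurd heq (by unfold stg; omega)
    · have h2 := (hCInv (2*z + 1)).2.1 z (by omega)
      exact h2 ⟨i, j, hij, hgt, hsup⟩
end Aux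

/-- exactly one of the following holds: there is a strong
immersion of `K^{ℵ₀}` in `G` with at most one branch vertex in every
edge-block of `G − X`, or `G − X` has only finitely many edge-blocks. -/
theorem duality_for_edge_blocks {V : Type*} (G : SimpleGraph V)
    (hG : InfEdgeConn G) (X : Set V) (hX : X.Finite) :
    Xor'
      (∃ (α : ℕ → V) (P : ∀ ⦃i j : ℕ⦄, (⊤ : SimpleGraph ℕ).Adj i j → G.Walk (α i) (α j)),
        IsStrongImmersion (⊤ : SimpleGraph ℕ) G α P ∧
        ∀ i j : ℕ, i ≠ j → ∀ (hi : α i ∈ (Xᶜ : Set V)) (hj : α j ∈ (Xᶜ : Set V)),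
          ¬ FinEdgeConn (G.induce (Xᶜ : Set V)) ⟨α i, hi⟩ ⟨α j, hj⟩)
      ({C : Set ↥(Xᶜ : Set V) |
          ∃ v, C = {u | FinEdgeConn (G.induce (Xᶜ : Set V)) u v}}.Finite) := by
  classical
  by_cases hfin : ({C : Set ↥(Xᶜ : Set V) |
      ∃ v, C = {u | FinEdgeConn (G.induce (Xᶜ : Set V)) u v}}.Finite)
  · -- finitely many edge-blocks: no such immersion can exist
    refine Or.inr ⟨hfin, ?_⟩
    rintro ⟨α, P, ⟨hαinj, -, -, -⟩, hcond⟩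
    have hpre : {i : ℕ | α i ∈ X}.Finite := by
      have h1 : {i : ℕ | α i ∈ X} = α ⁻¹' X := rfl
      rw [h1]
      exact Set.Finite.preimage (Function.Injective.injOn hαinj) hX
    apply hpre.infinite_compl
    set Fm : ℕ → Set ↥(Xᶜ : Set V) := fun i =>
      {u | ∃ (hi : α i ∈ (Xᶜ : Set V)), FinEdgeConn (G.induce (Xᶜ : Set V)) u ⟨α i, hi⟩}
      with hFm
    refine Set.Finite.of_finite_image (f := Fm) (Set.Finite.subset hfin ?_) ?_
    · rintro C ⟨i, hi, rfl⟩
      have hic : α i ∈ (Xᶜ : Set V) := hi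
      refine ⟨⟨α i, hic⟩, ?_⟩
      ext u
      constructor
      · rintro ⟨hi', h⟩
        exact h
      · intro h
        exact ⟨hic, h⟩
    · intro i hi j hj hEq
      by_contra hij
      have hic : α i ∈ (Xᶜ : Set V) := hi
      have hjc : α j ∈ (Xᶜ : Set V) := hj
      apply hcond i j hij hic hjc
      have h1 : (⟨α i, hic⟩ : ↥(Xᶜ : Set V)) ∈ Fm i := ⟨hic, fec_refl _ _⟩
      rw [hEq] at h1
      obtain ⟨hj', h⟩ := h1
      exact h
  · -- infinitely many edge-blocks: build the immersion
    obtain ⟨w, x, hwfec, hwhub⟩ := exists_pool hX hG hfin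
    have hx : x ∈ X := (hwhub 0).1
    have hQex : ∀ n : ℕ, ∃ Q : ℕ → G.Walk ((w n : V)) x,
        (∀ a, (Q a).IsPath) ∧ (∀ m m', m ≠ m' → EdgeDisjW (Q m) (Q m')) ∧
        (∀ a, ∀ z ∈ (Q a).support, z ∈ X → z = x) := fun n => (hwhub n).2
    set vv : ℕ → V := fun n => ((w n : V)) with hvv
    set Qf : ∀ n : ℕ, ℕ → G.Walk (vv n) x := fun n => Classical.choose (hQex n) with hQf
    have hQspec := fun n => Classical.choose_spec (hQex n)
    have hvinj : Function.Injective vv := by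
      intro m n hmn
      by_contra hne
      apply hwfec m n hne
      rw [show w m = w n from Subtype.ext hmn]
      exact fec_refl _ _
    have hQp : ∀ n a, (Qf n a).IsPath := fun n a => (hQspec n).1 a
    have hQd : ∀ n m m', m ≠ m' → EdgeDisjW (Qf n m) (Qf n m') := fun n => (hQspec n).2.1
    have hQX : ∀ n a, ∀ z ∈ (Qf n a).support, z ∈ X → z = x := fun n => (hQspec n).2.2
    have hQ4 : ∀ n m, n ≠ m → {a : ℕ | vv m ∈ (Qf n a).support}.Finite := by
      intro n m hnm
      exact finite_hits (u := w n) (u' := w m) hx (hQp n) (hQd n) (hQX n) (hwfec n m hnm)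
    obtain ⟨N, W, hNinj, hWpath, hWdisj, hWz⟩ := build_immersion x vv Qf hvinj hQp hQd hQ4
    have htop : ∀ {i j : ℕ}, (⊤ : SimpleGraph ℕ).Adj i j → i ≠ j := by
      intro i j h
      rwa [SimpleGraph.top_adj] at h
    refine Or.inl ⟨⟨fun k => vv (N k),
      fun i j hadj => if hij : i < j then W i j hij
        else (W j i (by have := htop hadj; omega)).reverse, ⟨?_, ?_, ?_, ?_⟩, ?_⟩, hfin⟩
    · exact hvinj.comp hNinj
    · intro i j hadj
      dsimp only
      by_cases hij : i < j
      · rw [dif_pos hij]; exact hWpath _ _ _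
      · rw [dif_neg hij]; exact (hWpath _ _ _).reverse
    · -- edge-disjointness
      intro u v u' v' h h' hsne
      dsimp only
      intro e he hc
      by_cases h1 : u < v <;> by_cases h2 : u' < v'
      · rw [dif_pos h1] at he
        rw [dif_pos h2] at hc
        refine hWdisj u v h1 u' v' h2 ?_ e he hc
        intro hpq
        apply hsne
        rw [Prod.mk.injEq] at hpq
        rw [hpq.1, hpq.2]
      · rw [dif_pos h1] at he
        rw [dif_neg h2, SimpleGraph.Walk.edges_reverse, List.mem_reverse] at hc
        refine hWdisj u v h1 v' u' (by have := htop h'; omega) ?_ e he hc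
        intro hpq
        apply hsne
        rw [Prod.mk.injEq] at hpq
        rw [hpq.1, hpq.2, Sym2.eq_swap]
      · rw [dif_neg h1, SimpleGraph.Walk.edges_reverse, List.mem_reverse] at he
        rw [dif_pos h2] at hc
        refine hWdisj v u (by have := htop h; omega) u' v' h2 ?_ e he hc
        intro hpq
        apply hsne
        rw [Prod.mk.injEq] at hpq
        rw [← hpq.1, ← hpq.2, Sym2.eq_swap]
      · rw [dif_neg h1, SimpleGraph.Walk.edges_reverse, List.mem_reverse] at he
        rw [dif_neg h2, SimpleGraph.Walk.edges_reverse, List.mem_reverse] at hc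
        refine hWdisj v u (by have := htop h; omega) v' u'
          (by have := htop h'; omega) ?_ e he hc
        intro hpq
        apply hsne
        rw [Prod.mk.injEq] at hpq
        rw [show u = u' from hpq.2, show v = v' from hpq.1]
    · -- branch vertices only as endpoints
      intro u v hadj y hy hex
      obtain ⟨z, hz⟩ := hex
      have hz' : vv (N z) = y := hz
      dsimp only at hy ⊢
      by_cases h1 : u < v
      · rw [dif_pos h1] at hy
        rw [← hz'] at hy
        rcases hWz u v h1 z hy with h | h
        · left; rw [← hz', h]
        · right; rw [← hz', h]
      · rw [dif_neg h1, SimpleGraph.Walk.support_reverse, List.mem_reverse] at hy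
        rw [← hz'] at hy
        rcases hWz v u (by have := htop hadj; omega) z hy with h | h
        · right; rw [← hz', h]
        · left; rw [← hz', h]
    · -- the branch vertices lie in distinct edge-blocks
      intro i j hij hi hj
      have e1 : w (N i) = ⟨vv (N i), hi⟩ := Subtype.ext rfl
      have e2 : w (N j) = ⟨vv (N j), hj⟩ := Subtype.ext rfl
      have h2 := hwfec (N i) (N j) (fun hmn => hij (hNinj hmn))
      rw [e1, e2] at h2
      exact h2
end
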